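/- arXiv:0911.3202 — 11 statements merged into one kernel-verified Lean document; each statement's English description precedes it below -/
import Mathlib

section
/- Let U, Ũ : ℝ → Matrix n n ℂ satisfy the Schrödinger equations U′(t) = −i H(t) U(t) and Ũ′(t) = −i H̃(t) Ũ(t), where H, H̃ : ℝ → Matrix n n ℂ are continuous and H(t), H̃(t) are Hermitian for every t, and suppose U(t₀) = Ũ(t₀) is unitary. Then for every t ≥ t₀, ‖Ũ(t) − U(t)‖ ≤ ∫_{t₀}^{t} ‖H̃(s) − H(s)‖ ds, where ‖·‖ denotes the operator norm. -/
open scoped Matrix.Norms.L2Operator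

private lemma matrix_norm_one_le {n : ℕ} : ‖(1 : Matrix (Fin n) (Fin n) ℂ)‖ ≤ 1 := by
  rw [Matrix.cstar_norm_def, map_one]
  exact ContinuousLinearMap.norm_id_le

private lemma norm_le_one_of_star_mul_self {n : ℕ} {A : Matrix (Fin n) (Fin n) ℂ}
    (h : star A * A = 1) : ‖A‖ ≤ 1 := by
  have h1 : ‖A‖ * ‖A‖ ≤ 1 := by
    rw [← CStarRing.norm_star_mul_self, h]
    exact matrix_norm_one_le
  nlinarith [norm_nonneg A]

/-- If V solves V' = -i K V with K Hermitian, then star (V t) * V t is constant. -/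
private lemma star_mul_self_const {n : ℕ} (K V : ℝ → Matrix (Fin n) (Fin n) ℂ)
    (hKherm : ∀ t, (K t).IsHermitian)
    (hV : ∀ t, HasDerivAt V ((-Complex.I) • (K t * V t)) t) (s t : ℝ) :
    star (V s) * V s = star (V t) * V t := by
  have hd : ∀ x, HasDerivAt (fun u => star (V u) * V u) 0 x := by
    intro x
    have h1 := ((hV x).star).mul (hV x)
    have : star ((-Complex.I) • (K x * V x)) * V x +
        star (V x) * ((-Complex.I) • (K x * V x)) = 0 := by
      have hK : star (K x) = K x := (hKherm x)
      rw [star_smul, star_mul, hK]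
      simp only [star_neg, Complex.star_def, Complex.conj_I, neg_neg, smul_mul_assoc,
        mul_neg, mul_smul_comm, neg_smul, mul_assoc]
      module
    rwa [this] at h1
  have hdiff : Differentiable ℝ (fun u => star (V u) * V u) :=
    fun x => (hd x).differentiableAt
  exact is_const_of_deriv_eq_zero hdiff (fun x => (hd x).deriv) s t

/-- If `U` and `Ũ` solve the Schrödinger equations `U' = -i H U`, `Ũ' = -i H̃ Ũ`
with continuous Hermitian Hamiltonians and the same unitary initial condition at `t₀`, then for
`t ≥ t₀` we have `‖Ũ t - U t‖ ≤ ∫_{t₀}^t ‖H̃ s - H s‖ ds` in the operator norm. -/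
theorem error_estimate_time_evolution {n : ℕ}
    (H Ht U Ut : ℝ → Matrix (Fin n) (Fin n) ℂ) (t₀ : ℝ)
    (hHcont : Continuous H) (hHtcont : Continuous Ht)
    (hHherm : ∀ t, (H t).IsHermitian) (hHtherm : ∀ t, (Ht t).IsHermitian)
    (hU : ∀ t, HasDerivAt U ((-Complex.I) • (H t * U t)) t)
    (hUt : ∀ t, HasDerivAt Ut ((-Complex.I) • (Ht t * Ut t)) t)
    (hinit : Ut t₀ = U t₀)
    (hunitary : U t₀ ∈ Matrix.unitaryGroup (Fin n) ℂ)
    (t : ℝ) (ht : t₀ ≤ t) :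
    ‖Ut t - U t‖ ≤ ∫ s in t₀..t, ‖Ht s - H s‖ := by
  -- unitarity of U s and Ut s for all s
  have hU0 : star (U t₀) * U t₀ = 1 := Matrix.mem_unitaryGroup_iff'.mp hunitary
  have hUunit : ∀ s, star (U s) * U s = 1 := fun s => by
    rw [star_mul_self_const H U hHherm hU s t₀, hU0]
  have hUtunit : ∀ s, star (Ut s) * Ut s = 1 := fun s => by
    rw [star_mul_self_const Ht Ut hHtherm hUt s t₀, hinit, hU0]
  have hUnorm : ∀ s, ‖U s‖ ≤ 1 := fun s => norm_le_one_of_star_mul_self (hUunit s)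
  have hUtnorm : ∀ s, ‖Ut s‖ ≤ 1 := fun s => norm_le_one_of_star_mul_self (hUtunit s)
  have hUstarnorm : ∀ s, ‖star (U s)‖ ≤ 1 := fun s =>
    norm_le_one_of_star_mul_self (by rw [star_star]; exact mul_eq_one_comm.mp (hUunit s))
  -- the comparison function D
  set D : ℝ → Matrix (Fin n) (Fin n) ℂ := fun s => star (U s) * Ut s - 1 with hD
  set g : ℝ → Matrix (Fin n) (Fin n) ℂ :=
    fun s => (-Complex.I) • (star (U s) * ((Ht s - H s) * Ut s)) with hg
  have hDderiv : ∀ s, HasDerivAt D (g s) s := by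
    intro s
    have h1 := (((hU s).star).mul (hUt s)).sub_const 1
    have : star ((-Complex.I) • (H s * U s)) * Ut s +
        star (U s) * ((-Complex.I) • (Ht s * Ut s)) = g s := by
      have hH : star (H s) = H s := (hHherm s)
      rw [star_smul, star_mul, hH, hg]
      simp only [star_neg, Complex.star_def, Complex.conj_I, neg_neg, sub_mul, mul_sub,
        smul_sub, smul_mul_assoc, mul_neg, mul_smul_comm, neg_smul, mul_assoc]
      module
    rwa [this] at h1
  -- continuity of everything
  have hUcont : Continuous U := by
    rw [continuous_iff_continuousAt]; exact fun x => (hU x).continuousAt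
  have hUtcont : Continuous Ut := by
    rw [continuous_iff_continuousAt]; exact fun x => (hUt x).continuousAt
  have hgcont : Continuous g :=
    (((hUcont.star).mul ((hHtcont.sub hHcont).mul hUtcont)).const_smul (-Complex.I))
  -- FTC
  have hftc : ∫ s in t₀..t, g s = D t - D t₀ :=
    intervalIntegral.integral_eq_sub_of_hasDerivAt
      (fun x _ => hDderiv x) (hgcont.intervalIntegrable t₀ t)
  have hD0 : D t₀ = 0 := by
    rw [hD]; simp only [hinit, hU0, sub_self]
  -- norm bound on g
  have hgnorm : ∀ s, ‖g s‖ ≤ ‖Ht s - H s‖ := by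
    intro s
    rw [hg]
    simp only
    rw [norm_smul, norm_neg, Complex.norm_I, one_mul]
    calc ‖star (U s) * ((Ht s - H s) * Ut s)‖
        ≤ ‖star (U s)‖ * ‖(Ht s - H s) * Ut s‖ := norm_mul_le _ _
      _ ≤ 1 * ‖(Ht s - H s) * Ut s‖ :=
          mul_le_mul_of_nonneg_right (hUstarnorm s) (norm_nonneg _)
      _ = ‖(Ht s - H s) * Ut s‖ := one_mul _
      _ ≤ ‖Ht s - H s‖ * ‖Ut s‖ := norm_mul_le _ _
      _ ≤ ‖Ht s - H s‖ * 1 :=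
          mul_le_mul_of_nonneg_left (hUtnorm s) (norm_nonneg _)
      _ = ‖Ht s - H s‖ := mul_one _
  -- bound on ‖D t‖
  have hDbound : ‖D t‖ ≤ ∫ s in t₀..t, ‖Ht s - H s‖ := by
    have h1 : ‖D t‖ = ‖∫ s in t₀..t, g s‖ := by rw [hftc, hD0, sub_zero]
    rw [h1]
    calc ‖∫ s in t₀..t, g s‖ ≤ ∫ s in t₀..t, ‖g s‖ :=
          intervalIntegral.norm_integral_le_integral_norm ht
      _ ≤ ∫ s in t₀..t, ‖Ht s - H s‖ := by
          apply intervalIntegral.integral_mono_on ht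
            (hgcont.norm.intervalIntegrable t₀ t)
            (((hHtcont.sub hHcont).norm).intervalIntegrable t₀ t)
          exact fun x _ => hgnorm x
  -- transfer back: Ut t - U t = U t * D t
  have hUU : U t * star (U t) = 1 := mul_eq_one_comm.mp (hUunit t)
  have hkey : Ut t - U t = U t * D t := by
    rw [hD]
    simp only [mul_sub, mul_one, ← mul_assoc, hUU, one_mul]
  calc ‖Ut t - U t‖ = ‖U t * D t‖ := by rw [hkey]
    _ ≤ ‖U t‖ * ‖D t‖ := norm_mul_le _ _
    _ ≤ 1 * ‖D t‖ := by gcongr; exact hUnorm t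
    _ = ‖D t‖ := one_mul _
    _ ≤ _ := hDbound
end

section
/- Let A be a complex Banach algebra, let H_B ∈ A with ‖H_B‖ ≤ β, let H′ : [0,T] → A be continuous with ‖H′(t)‖ ≤ J for all t ∈ [0,T], where β, J ≥ 0 and T ≥ 0, and set H(t) := H_B + H′(t). Then the second-order Magnus term Ω₂(T) := −(1/2) ∫_0^T ∫_0^{s₁} [H(s₁), H(s₂)] ds₂ ds₁ satisfies ‖Ω₂(T)‖ ≤ (1/2) (β + J) J T² = (1/2)(JT)(εT), where ε := β + J. -/
open intervalIntegral MeasureTheory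


/-- Bound on the second-order Magnus term.  With `H t = H_B + H' t`, `‖H_B‖ ≤ β`,
`‖H' t‖ ≤ J` on `[0,T]`, the term
`Ω₂(T) = -(1/2) ∫_0^T ∫_0^{s₁} [H(s₁), H(s₂)] ds₂ ds₁` satisfies
`‖Ω₂(T)‖ ≤ (1/2)(β+J) J T²`. -/
theorem magnus_second_order_bound
    {A : Type*} [NormedRing A] [NormedAlgebra ℂ A] [CompleteSpace A]
    (T β J : ℝ) (hT : 0 ≤ T) (hβ : 0 ≤ β) (hJ : 0 ≤ J)
    (H_B : A) (hHB : ‖H_B‖ ≤ β)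
    (H' : ℝ → A) (hcont : ContinuousOn H' (Set.Icc 0 T))
    (hbound : ∀ t ∈ Set.Icc (0:ℝ) T, ‖H' t‖ ≤ J)
    (H : ℝ → A) (hH : ∀ t, H t = H_B + H' t) :
    ‖(-(1/2 : ℝ)) • ∫ s₁ in (0:ℝ)..T, ∫ s₂ in (0:ℝ)..s₁,
        (H s₁ * H s₂ - H s₂ * H s₁)‖
      ≤ (1/2) * (β + J) * J * T^2 := by
  have hmem : ∀ t : ℝ, min T (max 0 t) ∈ Set.Icc (0:ℝ) T :=
    fun t => ⟨le_min hT (le_max_left 0 t), min_le_left _ _⟩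
  set K : ℝ → A := fun t => H' (min T (max 0 t)) with hKdef
  have hKcont : Continuous K := hcont.comp_continuous (by fun_prop) hmem
  have hKbound : ∀ t, ‖K t‖ ≤ J := fun t => hbound _ (hmem t)
  have hKeq : ∀ t ∈ Set.Icc (0:ℝ) T, K t = H' t := by
    intro t ht
    simp only [hKdef]
    rw [max_eq_right ht.1, min_eq_right ht.2]
  set c : ℝ → A := fun s => H_B * K s - K s * H_B with hcdef
  have hccont : Continuous c := by fun_prop
  have hcbound : ∀ s, ‖c s‖ ≤ 2 * β * J := by
    intro s
    calc ‖H_B * K s - K s * H_B‖ ≤ ‖H_B * K s‖ + ‖K s * H_B‖ := norm_sub_le _ _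
      _ ≤ ‖H_B‖ * ‖K s‖ + ‖K s‖ * ‖H_B‖ := add_le_add (norm_mul_le _ _) (norm_mul_le _ _)
      _ ≤ β * J + J * β := add_le_add
          (mul_le_mul hHB (hKbound s) (norm_nonneg _) hβ)
          (mul_le_mul (hKbound s) hHB (norm_nonneg _) hJ)
      _ = 2 * β * J := by ring
  set G : ℝ → A := fun s => ∫ u in (0:ℝ)..s, c u with hGdef
  set P : ℝ → A := fun s => ∫ u in (0:ℝ)..s, K u with hPdef
  have hGderiv : ∀ x : ℝ, HasDerivAt G (c x) x := fun x =>
    (hccont.integral_hasStrictDerivAt 0 x).hasDerivAt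
  have hGcont : Continuous G := by
    rw [continuous_iff_continuousAt]; exact fun x => (hGderiv x).continuousAt
  have hPcont : Continuous P := by
    rw [continuous_iff_continuousAt]
    exact fun x => ((hKcont.integral_hasStrictDerivAt 0 x).hasDerivAt).continuousAt
  set M : ℝ → A := fun s => K s * P s - P s * K s with hMdef
  have hMcont : Continuous M := by fun_prop
  -- inner integral identity
  have inner_eq : ∀ s₁ ∈ Set.uIcc (0:ℝ) T,
      (∫ s₂ in (0:ℝ)..s₁, (H s₁ * H s₂ - H s₂ * H s₁))
        = G s₁ - s₁ • c s₁ + M s₁ := by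
    intro s₁ hs₁
    rw [Set.uIcc_of_le hT] at hs₁
    have heqn : Set.EqOn (fun s₂ => H s₁ * H s₂ - H s₂ * H s₁)
        (fun s₂ => c s₂ - c s₁ + (K s₁ * K s₂ - K s₂ * K s₁)) (Set.uIcc 0 s₁) := by
      intro s₂ hs₂
      rw [Set.uIcc_of_le hs₁.1] at hs₂
      have hs₂' : s₂ ∈ Set.Icc (0:ℝ) T := ⟨hs₂.1, hs₂.2.trans hs₁.2⟩
      simp only [hH, hcdef, hKeq s₁ hs₁, hKeq s₂ hs₂']
      noncomm_ring
    have h1 : IntervalIntegrable (fun s₂ => c s₂ - c s₁) volume 0 s₁ :=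
      ((hccont.sub continuous_const).intervalIntegrable _ _)
    have h2 : IntervalIntegrable (fun s₂ => K s₁ * K s₂ - K s₂ * K s₁) volume 0 s₁ := by
      apply Continuous.intervalIntegrable; fun_prop
    have hB : (∫ s₂ in (0:ℝ)..s₁, (c s₂ - c s₁)) = G s₁ - s₁ • c s₁ := by
      rw [intervalIntegral.integral_sub (hccont.intervalIntegrable _ _)
        intervalIntegrable_const, intervalIntegral.integral_const, sub_zero]
    have hL : (∫ s₂ in (0:ℝ)..s₁, K s₁ * K s₂) = K s₁ * P s₁ :=
      (ContinuousLinearMap.intervalIntegral_comp_comm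
        (ContinuousLinearMap.mul ℝ A (K s₁)) (hKcont.intervalIntegrable _ _))
    have hR : (∫ s₂ in (0:ℝ)..s₁, K s₂ * K s₁) = P s₁ * K s₁ :=
      (ContinuousLinearMap.intervalIntegral_comp_comm
        ((ContinuousLinearMap.mul ℝ A).flip (K s₁)) (hKcont.intervalIntegrable _ _))
    have hC : (∫ s₂ in (0:ℝ)..s₁, (K s₁ * K s₂ - K s₂ * K s₁)) = M s₁ := by
      rw [intervalIntegral.integral_sub (f := fun s₂ => K s₁ * K s₂) (g := fun s₂ => K s₂ * K s₁)
        ((continuous_const.mul hKcont).intervalIntegrable _ _ : IntervalIntegrable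
          (fun s₂ => K s₁ * K s₂) volume 0 s₁)
        ((hKcont.mul continuous_const).intervalIntegrable _ _ : IntervalIntegrable
          (fun s₂ => K s₂ * K s₁) volume 0 s₁), hL, hR]
    rw [intervalIntegral.integral_congr heqn, intervalIntegral.integral_add h1 h2, hB, hC]
  -- integration by parts
  have i1 : IntervalIntegrable G volume 0 T := hGcont.intervalIntegrable _ _
  have i2 : IntervalIntegrable (fun s : ℝ => s • c s) volume 0 T := by
    apply Continuous.intervalIntegrable; fun_prop
  have i3 : IntervalIntegrable M volume 0 T := hMcont.intervalIntegrable _ _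
  have parts : (∫ s in (0:ℝ)..T, G s) + (∫ s in (0:ℝ)..T, s • c s) = T • G T := by
    have hd : ∀ x ∈ Set.uIcc (0:ℝ) T, HasDerivAt (fun t => t • G t) (G x + x • c x) x := by
      intro x _
      have := (hasDerivAt_id' x).smul (hGderiv x)
      simp only [one_smul] at this
      rw [add_comm]; exact this
    have hint : IntervalIntegrable (fun x => G x + x • c x) volume 0 T := i1.add i2
    have := intervalIntegral.integral_eq_sub_of_hasDerivAt hd hint
    rw [intervalIntegral.integral_add i1 i2] at this
    simpa using this
  -- key rewrite of the double integral
  have keyI : (∫ s₁ in (0:ℝ)..T, ∫ s₂ in (0:ℝ)..s₁, (H s₁ * H s₂ - H s₂ * H s₁))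
      = (∫ s in (0:ℝ)..T, (T - 2*s) • c s) + ∫ s in (0:ℝ)..T, M s := by
    rw [intervalIntegral.integral_congr inner_eq,
      intervalIntegral.integral_add (i1.sub i2) i3,
      intervalIntegral.integral_sub i1 i2]
    congr 1
    have hptw : (fun s => (T - 2*s) • c s) = fun s => T • c s - (2:ℝ) • (s • c s) := by
      funext s; module
    have iTc : IntervalIntegrable (fun s : ℝ => T • c s) volume 0 T :=
      (hccont.const_smul _).intervalIntegrable _ _
    have i2' : IntervalIntegrable (fun s : ℝ => (2:ℝ) • (s • c s)) volume 0 T :=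
      i2.smul _
    rw [hptw, intervalIntegral.integral_sub iTc i2',
      intervalIntegral.integral_smul, intervalIntegral.integral_smul]
    rw [show (∫ s in (0:ℝ)..T, c s) = G T from rfl, ← parts]
    module
  -- bound on first term
  have habs : (∫ s in (0:ℝ)..T, |T - 2*s| * (2*β*J)) = β*J*T^2 := by
    rw [← intervalIntegral.integral_add_adjacent_intervals (a := (0:ℝ)) (b := T/2) (c := T)
      (by apply Continuous.intervalIntegrable; fun_prop)
      (by apply Continuous.intervalIntegrable; fun_prop)]
    have e1 : (∫ s in (0:ℝ)..(T/2), |T - 2*s| * (2*β*J))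
        = ∫ s in (0:ℝ)..(T/2), (T - 2*s) * (2*β*J) := by
      apply intervalIntegral.integral_congr
      intro s hs
      rw [Set.uIcc_of_le (by linarith)] at hs
      obtain ⟨hs1, hs2⟩ := hs
      simp only [abs_of_nonneg (show (0:ℝ) ≤ T - 2*s by linarith)]
    have e2 : (∫ s in (T/2)..T, |T - 2*s| * (2*β*J))
        = ∫ s in (T/2)..T, (2*s - T) * (2*β*J) := by
      apply intervalIntegral.integral_congr
      intro s hs
      rw [Set.uIcc_of_le (by linarith)] at hs
      obtain ⟨hs1, hs2⟩ := hs
      simp only [abs_of_nonpos (show T - 2*s ≤ (0:ℝ) by linarith), neg_sub]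
    rw [e1, e2, intervalIntegral.integral_mul_const, intervalIntegral.integral_mul_const]
    have p1 : (∫ s in (0:ℝ)..(T/2), (T - 2*s)) = T^2/4 := by
      rw [intervalIntegral.integral_sub intervalIntegrable_const
        (by apply Continuous.intervalIntegrable; fun_prop),
        intervalIntegral.integral_const_mul, integral_id, intervalIntegral.integral_const]
      simp only [smul_eq_mul]; ring
    have p2 : (∫ s in (T/2)..T, (2*s - T)) = T^2/4 := by
      rw [intervalIntegral.integral_sub
        (by apply Continuous.intervalIntegrable; fun_prop) intervalIntegrable_const,
        intervalIntegral.integral_const_mul, integral_id, intervalIntegral.integral_const]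
      simp only [smul_eq_mul]; ring
    rw [p1, p2]; ring
  have bnd1 : ‖∫ s in (0:ℝ)..T, (T - 2*s) • c s‖ ≤ β*J*T^2 := by
    have h := intervalIntegral.norm_integral_le_abs_of_norm_le
      (μ := volume) (a := 0) (b := T)
      (f := fun s => (T - 2*s) • c s) (g := fun s => |T - 2*s| * (2*β*J))
      (ae_of_all _ (fun t => by
        simp only [norm_smul, Real.norm_eq_abs]
        exact mul_le_mul_of_nonneg_left (hcbound t) (abs_nonneg _)))
      (by apply Continuous.intervalIntegrable; fun_prop)
    rw [habs] at h
    refine h.trans ?_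
    rw [abs_of_nonneg (by positivity)]
  have bnd2 : ‖∫ s in (0:ℝ)..T, M s‖ ≤ J*J*T^2 := by
    have hMb : ∀ s ∈ Set.uIoc (0:ℝ) T, ‖M s‖ ≤ 2*J*(J*s) := by
      intro s hs
      rw [Set.uIoc_of_le hT] at hs
      have hs0 : (0:ℝ) ≤ s := le_of_lt hs.1
      have hPs : ‖P s‖ ≤ J * s := by
        have := intervalIntegral.norm_integral_le_of_norm_le_const
          (C := J) (f := K) (a := 0) (b := s) (fun x _ => hKbound x)
        simpa [abs_of_nonneg hs0] using this
      have hJs : (0:ℝ) ≤ J * s := mul_nonneg hJ hs0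
      calc ‖K s * P s - P s * K s‖ ≤ ‖K s * P s‖ + ‖P s * K s‖ := norm_sub_le _ _
        _ ≤ ‖K s‖ * ‖P s‖ + ‖P s‖ * ‖K s‖ := add_le_add (norm_mul_le _ _) (norm_mul_le _ _)
        _ ≤ J * (J*s) + (J*s) * J := add_le_add
            (mul_le_mul (hKbound s) hPs (norm_nonneg _) hJ)
            (mul_le_mul hPs (hKbound s) (norm_nonneg _) hJs)
        _ = 2*J*(J*s) := by ring
    have h := intervalIntegral.norm_integral_le_abs_of_norm_le
      (μ := volume) (a := 0) (b := T) (f := M) (g := fun s => 2*J*(J*s))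
      ((ae_restrict_mem measurableSet_uIoc).mono hMb)
      (by apply Continuous.intervalIntegrable; fun_prop)
    have hval : (∫ s in (0:ℝ)..T, 2*J*(J*s)) = J*J*T^2 := by
      rw [show (fun s : ℝ => 2*J*(J*s)) = fun s => (2*J*J) * s from by funext s; ring,
        intervalIntegral.integral_const_mul, integral_id]
      ring
    rw [hval, abs_of_nonneg (by positivity)] at h
    exact h
  calc ‖(-(1/2 : ℝ)) • ∫ s₁ in (0:ℝ)..T, ∫ s₂ in (0:ℝ)..s₁, (H s₁ * H s₂ - H s₂ * H s₁)‖
      = (1/2) * ‖∫ s₁ in (0:ℝ)..T, ∫ s₂ in (0:ℝ)..s₁, (H s₁ * H s₂ - H s₂ * H s₁)‖ := by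
        rw [norm_smul]; norm_num
    _ ≤ (1/2) * (β*J*T^2 + J*J*T^2) := by
        rw [keyI]
        have := (norm_add_le (∫ s in (0:ℝ)..T, (T - 2*s) • c s) (∫ s in (0:ℝ)..T, M s)).trans
          (add_le_add bnd1 bnd2)
        linarith
    _ ≤ (1/2) * (β + J) * J * T^2 := by nlinarith [sq_nonneg T]
end

section
/- Let A be a complex Banach algebra, let H_B ∈ A, let H′ : [0,T] → A be continuous with ‖H′(t)‖ ≤ J for all t, set H(t) := H_B + H′(t) and assume ‖H(t)‖ ≤ ε for all t ∈ [0,T]. Let Δ ⊆ [0,T] be a measurable set of Lebesgue measure δ ≤ T that is invariant under the reflection t ↦ T − t, and suppose the time-symmetry H(T − t) = H(t) holds for all t ∈ [0,T] \ Δ. Then the second-order Magnus term Ω₂(T) := −(1/2) ∫_0^T ∫_0^{s₁} [H(s₁), H(s₂)] ds₂ ds₁ satisfies ‖Ω₂(T)‖ ≤ 2 J ε (δT − δ²/2) = 2 (δ/T)(1 − δ/(2T)) (JT)(εT). -/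
open MeasureTheory

/-- Bound on the second-order Magnus term for a nearly time-symmetric Hamiltonian.
If `H t = H_B + H' t` with `‖H' t‖ ≤ J` and `‖H t‖ ≤ ε` on `[0,T]`, and `H(T - t) = H(t)` holds
outside a reflection-invariant measurable set `Δ ⊆ [0,T]` of Lebesgue measure `δ ≤ T`, then
`‖Ω₂(T)‖ ≤ 2 J ε (δT - δ²/2)`. -/
theorem magnus_second_order_time_symmetric_bound
    {A : Type*} [NormedRing A] [NormedAlgebra ℂ A] [CompleteSpace A]
    (T J ε δ : ℝ) (hT : 0 ≤ T)
    (H_B : A) (H' : ℝ → A) (hcont : ContinuousOn H' (Set.Icc 0 T))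
    (H : ℝ → A) (hH : ∀ t, H t = H_B + H' t)
    (hJ : ∀ t ∈ Set.Icc (0:ℝ) T, ‖H' t‖ ≤ J)
    (hε : ∀ t ∈ Set.Icc (0:ℝ) T, ‖H t‖ ≤ ε)
    (Δ : Set ℝ) (hΔsub : Δ ⊆ Set.Icc 0 T) (hΔmeas : MeasurableSet Δ)
    (hδ0 : 0 ≤ δ) (hδ : volume Δ = ENNReal.ofReal δ) (hδT : δ ≤ T)
    (hΔsym : ∀ t ∈ Δ, T - t ∈ Δ)
    (hsym : ∀ t ∈ Set.Icc (0:ℝ) T \ Δ, H (T - t) = H t) :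
    ‖(-(1/2 : ℝ)) • ∫ s₁ in (0:ℝ)..T, ∫ s₂ in (0:ℝ)..s₁,
        (H s₁ * H s₂ - H s₂ * H s₁)‖
      ≤ 2 * J * ε * (δ * T - δ^2 / 2) := by
  have h0K : (0:ℝ) ∈ Set.Icc (0:ℝ) T := Set.mem_Icc.mpr ⟨le_rfl, hT⟩
  have hTK : T ∈ Set.Icc (0:ℝ) T := Set.mem_Icc.mpr ⟨hT, le_rfl⟩
  have hε0 : 0 ≤ ε := (norm_nonneg _).trans (hε 0 h0K)
  have hJ0 : 0 ≤ J := (norm_nonneg _).trans (hJ 0 h0K)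
  have hHc : ContinuousOn H (Set.Icc 0 T) := by
    have hfe : H = fun t => H_B + H' t := funext hH
    rw [hfe]; exact continuousOn_const.add hcont
  have hrefl : ∀ s ∈ Set.Icc (0:ℝ) T, T - s ∈ Set.Icc (0:ℝ) T := by
    intro s hs
    rcases Set.mem_Icc.mp hs with ⟨h1, h2⟩
    exact Set.mem_Icc.mpr ⟨by linarith, by linarith⟩
  have hΔiff : ∀ t : ℝ, T - t ∈ Δ ↔ t ∈ Δ := by
    intro t
    constructor
    · intro h; simpa using hΔsym _ h
    · exact hΔsym t
  set G : ℝ → A := fun t => H (T - t) with hGdef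
  have hGc : ContinuousOn G (Set.Icc 0 T) :=
    hHc.comp ((continuous_const.sub continuous_id).continuousOn) hrefl
  -- integrability from continuity
  have hiiA : ∀ (f : ℝ → A), ContinuousOn f (Set.Icc 0 T) → ∀ a b : ℝ,
      a ∈ Set.Icc (0:ℝ) T → b ∈ Set.Icc (0:ℝ) T → IntervalIntegrable f volume a b := by
    intro f hf a b ha hb
    exact (hf.mono (Set.uIcc_subset_Icc ha hb)).intervalIntegrable
  set Φ : ℝ → A := fun t => ∫ s in (0:ℝ)..t, H s with hΦdef
  set Ψ : ℝ → A := fun t => ∫ s in (0:ℝ)..t, G s with hΨdef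
  have hΦc : ContinuousOn Φ (Set.Icc 0 T) := by
    apply (intervalIntegral.continuousOn_primitive (μ := volume) (hHc.integrableOn_Icc)).congr
    intro x hx
    simp only [hΦdef]
    rw [intervalIntegral.integral_of_le hx.1]
  have hΨc : ContinuousOn Ψ (Set.Icc 0 T) := by
    apply (intervalIntegral.continuousOn_primitive (μ := volume) (hGc.integrableOn_Icc)).congr
    intro x hx
    simp only [hΨdef]
    rw [intervalIntegral.integral_of_le hx.1]
  have hΦn : ∀ t ∈ Set.Icc (0:ℝ) T, ‖Φ t‖ ≤ ε * t := by
    intro t ht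
    have h1 : ‖Φ t‖ ≤ ε * |t - 0| := by
      apply intervalIntegral.norm_integral_le_of_norm_le_const
      intro x hx
      rw [Set.uIoc_of_le ht.1] at hx
      exact hε x ⟨le_of_lt hx.1, hx.2.trans ht.2⟩
    simpa [abs_of_nonneg ht.1] using h1
  have hΨn : ∀ t ∈ Set.Icc (0:ℝ) T, ‖Ψ t‖ ≤ ε * t := by
    intro t ht
    have h1 : ‖Ψ t‖ ≤ ε * |t - 0| := by
      apply intervalIntegral.norm_integral_le_of_norm_le_const
      intro x hx
      rw [Set.uIoc_of_le ht.1] at hx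
      exact hε _ (hrefl x ⟨le_of_lt hx.1, hx.2.trans ht.2⟩)
    simpa [abs_of_nonneg ht.1] using h1
  -- pulling constants through integrals
  have hmulL : ∀ (c : A) (f : ℝ → A) (a b : ℝ), IntervalIntegrable f volume a b →
      (∫ x in a..b, c * f x) = c * ∫ x in a..b, f x := by
    intro c f a b hf
    exact (ContinuousLinearMap.mul ℝ A c).intervalIntegral_comp_comm hf
  have hmulR : ∀ (c : A) (f : ℝ → A) (a b : ℝ), IntervalIntegrable f volume a b →
      (∫ x in a..b, f x * c) = (∫ x in a..b, f x) * c := by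
    intro c f a b hf
    exact ((ContinuousLinearMap.mul ℝ A).flip c).intervalIntegral_comp_comm hf
  -- Step 1: inner integral
  have step1 : (∫ s₁ in (0:ℝ)..T, ∫ s₂ in (0:ℝ)..s₁, (H s₁ * H s₂ - H s₂ * H s₁))
      = ∫ t in (0:ℝ)..T, (H t * Φ t - Φ t * H t) := by
    apply intervalIntegral.integral_congr
    rw [Set.uIcc_of_le hT]
    intro s₁ hs₁
    have hint : IntervalIntegrable H volume 0 s₁ := hiiA H hHc 0 s₁ h0K hs₁
    simp only [hΦdef]
    rw [intervalIntegral.integral_sub (hint.const_mul _) (hint.mul_const _),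
      hmulL _ _ _ _ hint, hmulR _ _ _ _ hint]
  -- Step 2: replace by the reversed primitive
  have hΦT : Φ T = ∫ s in (0:ℝ)..T, H s := rfl
  have hintT : IntervalIntegrable H volume 0 T := hiiA H hHc 0 T h0K hTK
  have hHPint : IntervalIntegrable (fun t => H t * Φ t - Φ t * H t) volume 0 T :=
    hiiA _ ((hHc.mul hΦc).sub (hΦc.mul hHc)) 0 T h0K hTK
  have step2 : (∫ t in (0:ℝ)..T, (H t * Φ t - Φ t * H t))
      = ∫ t in (0:ℝ)..T, ((Φ T - Φ t) * H t - H t * (Φ T - Φ t)) := by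
    have expand : (∫ t in (0:ℝ)..T, ((Φ T - Φ t) * H t - H t * (Φ T - Φ t)))
        = ∫ t in (0:ℝ)..T, ((Φ T * H t - H t * Φ T) + (H t * Φ t - Φ t * H t)) := by
      apply intervalIntegral.integral_congr
      intro t _
      noncomm_ring
    rw [expand, intervalIntegral.integral_add
      ((hintT.const_mul _).sub (hintT.mul_const _)) hHPint,
      intervalIntegral.integral_sub (hintT.const_mul _) (hintT.mul_const _),
      hmulL _ _ _ _ hintT, hmulR _ _ _ _ hintT]
    rw [← hΦT]
    abel
  -- Step 3: substitution t ↦ T - t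
  have step3 : (∫ t in (0:ℝ)..T, ((Φ T - Φ t) * H t - H t * (Φ T - Φ t)))
      = ∫ u in (0:ℝ)..T, ((Φ T - Φ (T - u)) * H (T - u) - H (T - u) * (Φ T - Φ (T - u))) := by
    have h := intervalIntegral.integral_comp_sub_left
      (fun t => ((Φ T - Φ t) * H t - H t * (Φ T - Φ t))) T (a := (0:ℝ)) (b := T)
    simpa using h.symm
  -- Step 4: identify with Ψ and G
  have hΨeq : ∀ u ∈ Set.Icc (0:ℝ) T, Φ T - Φ (T - u) = Ψ u := by
    intro u hu
    have h1 : Φ T - Φ (T - u) = ∫ s in (T - u)..T, H s := by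
      simp only [hΦdef]
      exact intervalIntegral.integral_interval_sub_left hintT
        (hiiA H hHc 0 (T - u) h0K (hrefl u hu))
    have h2 : Ψ u = ∫ s in (T - u)..T, H s := by
      simp only [hΨdef, hGdef]
      have h := intervalIntegral.integral_comp_sub_left H T (a := (0:ℝ)) (b := u)
      simpa using h
    rw [h1, h2]
  have step4 : (∫ u in (0:ℝ)..T, ((Φ T - Φ (T - u)) * H (T - u) - H (T - u) * (Φ T - Φ (T - u))))
      = ∫ u in (0:ℝ)..T, (Ψ u * G u - G u * Ψ u) := by
    apply intervalIntegral.integral_congr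
    rw [Set.uIcc_of_le hT]
    intro u hu
    simp only [hGdef]
    rw [hΨeq u hu]
  -- the two representations of I
  have hGΨint : IntervalIntegrable (fun t => Ψ t * G t - G t * Ψ t) volume 0 T :=
    hiiA _ ((hΨc.mul hGc).sub (hGc.mul hΨc)) 0 T h0K hTK
  have hrep : (∫ s₁ in (0:ℝ)..T, ∫ s₂ in (0:ℝ)..s₁, (H s₁ * H s₂ - H s₂ * H s₁))
      = ∫ t in (0:ℝ)..T, (Ψ t * G t - G t * Ψ t) := by
    rw [step1, step2, step3, step4]
  -- the doubled integral
  have hdouble : (∫ t in (0:ℝ)..T, (H t * Φ t - Φ t * H t))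
      + (∫ t in (0:ℝ)..T, (Ψ t * G t - G t * Ψ t))
      = ∫ t in (0:ℝ)..T, ((H t * Φ t - Φ t * H t) + (Ψ t * G t - G t * Ψ t)) :=
    (intervalIntegral.integral_add hHPint hGΨint).symm
  -- measure-theoretic quantities
  have hΔfin : volume Δ ≠ ⊤ := by rw [hδ]; exact ENNReal.ofReal_ne_top
  set g : ℝ → ℝ := fun t => (volume (Δ ∩ Set.Iic t)).toReal with hgdef
  have hgfin : ∀ t : ℝ, volume (Δ ∩ Set.Iic t) ≠ ⊤ :=
    fun t => ne_top_of_le_ne_top hΔfin (measure_mono Set.inter_subset_left)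
  have hgfin' : ∀ t : ℝ, volume (Δ ∩ Set.Ici t) ≠ ⊤ :=
    fun t => ne_top_of_le_ne_top hΔfin (measure_mono Set.inter_subset_left)
  have hg0 : ∀ t : ℝ, 0 ≤ g t := fun t => ENNReal.toReal_nonneg
  have hgmono : Monotone g := by
    intro a b hab
    exact ENNReal.toReal_mono (hgfin b)
      (measure_mono (Set.inter_subset_inter_right _ (Set.Iic_subset_Iic.mpr hab)))
  have hgint : IntervalIntegrable g volume 0 T :=
    (hgmono.monotoneOn _).intervalIntegrable
  -- indicator integrability
  have hindint : ∀ (f : ℝ → ℝ), ContinuousOn f (Set.Icc 0 T) → ∀ a b : ℝ,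
      a ∈ Set.Icc (0:ℝ) T → b ∈ Set.Icc (0:ℝ) T →
      IntervalIntegrable (Set.indicator Δ f) volume a b := by
    intro f hf a b ha hb
    rw [intervalIntegrable_iff]
    have h1 : IntegrableOn f Δ (volume.restrict (Set.uIoc a b)) := by
      rw [IntegrableOn, Measure.restrict_restrict hΔmeas]
      exact (hf.integrableOn_Icc).mono_set
        (Set.inter_subset_left.trans hΔsub)
    exact (integrable_indicator_iff hΔmeas).mpr h1
  -- bound on the defect D = H - G
  have hDbound : ∀ t ∈ Set.Icc (0:ℝ) T,
      ‖H t - G t‖ ≤ 2 * J * Set.indicator Δ (fun _ => (1:ℝ)) t := by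
    intro t ht
    by_cases hm : t ∈ Δ
    · rw [Set.indicator_of_mem hm]
      have heq : H t - G t = H' t - H' (T - t) := by
        simp only [hGdef, hH t, hH (T - t)]
        abel
      rw [heq]
      calc ‖H' t - H' (T - t)‖ ≤ ‖H' t‖ + ‖H' (T - t)‖ := norm_sub_le _ _
        _ ≤ J + J := add_le_add (hJ t ht) (hJ _ (hrefl t ht))
        _ = 2 * J * 1 := by ring
    · rw [Set.indicator_of_notMem hm]
      have heq : G t = H t := hsym t ⟨ht, hm⟩
      rw [heq, sub_self, norm_zero]
      simp
  -- bound on E = Φ - Ψ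
  have hEbound : ∀ t ∈ Set.Icc (0:ℝ) T, ‖Φ t - Ψ t‖ ≤ 2 * J * g t := by
    intro t ht
    have hHi : IntervalIntegrable H volume 0 t := hiiA H hHc 0 t h0K ht
    have hGi : IntervalIntegrable G volume 0 t := hiiA G hGc 0 t h0K ht
    have h1 : Φ t - Ψ t = ∫ s in (0:ℝ)..t, (H s - G s) := by
      simp only [hΦdef, hΨdef]
      rw [intervalIntegral.integral_sub hHi hGi]
    rw [h1]
    have hDc : ContinuousOn (fun s => ‖H s - G s‖) (Set.Icc 0 T) := (hHc.sub hGc).norm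
    calc ‖∫ s in (0:ℝ)..t, (H s - G s)‖
        ≤ ∫ s in (0:ℝ)..t, ‖H s - G s‖ :=
          intervalIntegral.norm_integral_le_integral_norm ht.1
      _ ≤ ∫ s in (0:ℝ)..t, Set.indicator Δ (fun _ => 2 * J) s := by
          apply intervalIntegral.integral_mono_on ht.1
            (hiiA _ (hHc.sub hGc) 0 t h0K ht).norm
            (hindint _ continuousOn_const 0 t h0K ht)
          intro x hx
          have hx' : x ∈ Set.Icc (0:ℝ) T := ⟨hx.1, hx.2.trans ht.2⟩
          have hb := hDbound x hx'
          by_cases hm : x ∈ Δ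
          · rw [Set.indicator_of_mem hm] at hb ⊢
            show ‖H x - G x‖ ≤ 2 * J
            linarith
          · rw [Set.indicator_of_notMem hm] at hb ⊢
            simpa using hb
      _ = (volume (Set.Ioc 0 t ∩ Δ)).toReal * (2 * J) := by
          rw [intervalIntegral.integral_of_le ht.1,
            MeasureTheory.setIntegral_indicator hΔmeas, MeasureTheory.setIntegral_const,
            smul_eq_mul]
          rfl
      _ ≤ 2 * J * g t := by
          have hsub : Set.Ioc 0 t ∩ Δ ⊆ Δ ∩ Set.Iic t := by
            intro x hx
            exact ⟨hx.2, hx.1.2⟩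
          have hm : (volume (Set.Ioc 0 t ∩ Δ)).toReal ≤ g t :=
            ENNReal.toReal_mono (hgfin t) (measure_mono hsub)
          have h2J : 0 ≤ 2 * J := by linarith
          calc (volume (Set.Ioc 0 t ∩ Δ)).toReal * (2 * J)
              = 2 * J * (volume (Set.Ioc 0 t ∩ Δ)).toReal := by ring
            _ ≤ 2 * J * g t := mul_le_mul_of_nonneg_left hm h2J
  -- pointwise bound on the doubled integrand
  have hWbound : ∀ t ∈ Set.Icc (0:ℝ) T,
      ‖(H t * Φ t - Φ t * H t) + (Ψ t * G t - G t * Ψ t)‖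
        ≤ 4 * ε * J * Set.indicator Δ id t + 4 * ε * J * g t := by
    intro t ht
    have hWeq : (H t * Φ t - Φ t * H t) + (Ψ t * G t - G t * Ψ t)
        = (H t - G t) * Φ t + G t * (Φ t - Ψ t) - (Φ t - Ψ t) * H t - Ψ t * (H t - G t) := by
      noncomm_ring
    have hn1 : ‖(H t - G t) * Φ t + G t * (Φ t - Ψ t) - (Φ t - Ψ t) * H t - Ψ t * (H t - G t)‖
        ≤ ‖H t - G t‖ * ‖Φ t‖ + ‖G t‖ * ‖Φ t - Ψ t‖ + ‖Φ t - Ψ t‖ * ‖H t‖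
          + ‖Ψ t‖ * ‖H t - G t‖ := by
      calc ‖(H t - G t) * Φ t + G t * (Φ t - Ψ t) - (Φ t - Ψ t) * H t - Ψ t * (H t - G t)‖
          ≤ ‖(H t - G t) * Φ t + G t * (Φ t - Ψ t) - (Φ t - Ψ t) * H t‖
            + ‖Ψ t * (H t - G t)‖ := norm_sub_le _ _
        _ ≤ ‖(H t - G t) * Φ t + G t * (Φ t - Ψ t)‖ + ‖(Φ t - Ψ t) * H t‖
            + ‖Ψ t * (H t - G t)‖ := by
            gcongr
            exact norm_sub_le _ _
        _ ≤ ‖(H t - G t) * Φ t‖ + ‖G t * (Φ t - Ψ t)‖ + ‖(Φ t - Ψ t) * H t‖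
            + ‖Ψ t * (H t - G t)‖ := by
            gcongr
            exact norm_add_le _ _
        _ ≤ ‖H t - G t‖ * ‖Φ t‖ + ‖G t‖ * ‖Φ t - Ψ t‖ + ‖Φ t - Ψ t‖ * ‖H t‖
            + ‖Ψ t‖ * ‖H t - G t‖ := by
            gcongr <;> exact norm_mul_le _ _
    have h1 := hDbound t ht
    have h2 := hEbound t ht
    have h3 := hΦn t ht
    have h4 := hΨn t ht
    have h5 := hε t ht
    have h6 : ‖G t‖ ≤ ε := hε _ (hrefl t ht)
    have ht0 : 0 ≤ t := ht.1
    have hid : Set.indicator Δ id t = t * Set.indicator Δ (fun _ => (1:ℝ)) t := by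
      by_cases hm : t ∈ Δ
      · rw [Set.indicator_of_mem hm, Set.indicator_of_mem hm]
        simp
      · rw [Set.indicator_of_notMem hm, Set.indicator_of_notMem hm]
        simp
    rw [hWeq, hid]
    have hind0 : 0 ≤ Set.indicator Δ (fun _ => (1:ℝ)) t := by
      by_cases hm : t ∈ Δ
      · rw [Set.indicator_of_mem hm]; norm_num
      · rw [Set.indicator_of_notMem hm]
    have hD0 : 0 ≤ ‖H t - G t‖ := norm_nonneg _
    have hE0 : 0 ≤ ‖Φ t - Ψ t‖ := norm_nonneg _
    have hΦ0 : 0 ≤ ‖Φ t‖ := norm_nonneg _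
    have hgt0 : 0 ≤ g t := hg0 t
    nlinarith [mul_le_mul h1 h3 hΦ0 (by positivity : (0:ℝ) ≤ 2 * J * Set.indicator Δ (fun _ => (1:ℝ)) t),
      mul_le_mul h6 h2 hE0 hε0,
      mul_le_mul h2 h5 (norm_nonneg _) (by positivity : (0:ℝ) ≤ 2 * J * g t),
      mul_le_mul h4 h1 hD0 (by positivity : (0:ℝ) ≤ ε * t)]
  -- integrability of the bounding function
  have hidint : IntervalIntegrable (Set.indicator Δ id) volume 0 T :=
    hindint id continuous_id.continuousOn 0 T h0K hTK
  have hβint : IntervalIntegrable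
      (fun t => 4 * ε * J * Set.indicator Δ id t + 4 * ε * J * g t) volume 0 T :=
    (hidint.const_mul _).add (hgint.const_mul _)
  -- the norm bound on the doubled integral
  have hWc : ContinuousOn (fun t => (H t * Φ t - Φ t * H t) + (Ψ t * G t - G t * Ψ t))
      (Set.Icc 0 T) := ((hHc.mul hΦc).sub (hΦc.mul hHc)).add ((hΨc.mul hGc).sub (hGc.mul hΨc))
  have hWint : IntervalIntegrable
      (fun t => (H t * Φ t - Φ t * H t) + (Ψ t * G t - G t * Ψ t)) volume 0 T :=
    hiiA _ hWc 0 T h0K hTK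
  have hnorm2 : ‖∫ t in (0:ℝ)..T, ((H t * Φ t - Φ t * H t) + (Ψ t * G t - G t * Ψ t))‖
      ≤ ∫ t in (0:ℝ)..T, (4 * ε * J * Set.indicator Δ id t + 4 * ε * J * g t) := by
    calc ‖∫ t in (0:ℝ)..T, ((H t * Φ t - Φ t * H t) + (Ψ t * G t - G t * Ψ t))‖
        ≤ ∫ t in (0:ℝ)..T, ‖(H t * Φ t - Φ t * H t) + (Ψ t * G t - G t * Ψ t)‖ :=
          intervalIntegral.norm_integral_le_integral_norm hT
      _ ≤ ∫ t in (0:ℝ)..T, (4 * ε * J * Set.indicator Δ id t + 4 * ε * J * g t) :=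
          intervalIntegral.integral_mono_on hT hWint.norm hβint hWbound
  -- compute the integrals of the bounding function via reflection symmetry
  have hrΔ : MeasurePreserving (fun y : ℝ => T - y) volume volume := by
    have h1 := Measure.measurePreserving_neg (volume : Measure ℝ)
    have h2 := measurePreserving_add_left (volume : Measure ℝ) T
    have h3 := h2.comp h1
    simpa [Function.comp_def, sub_eq_add_neg] using h3
  have hIocΔ : volume (Set.Ioc 0 T ∩ Δ) = ENNReal.ofReal δ := by
    rw [← hδ]
    apply le_antisymm (measure_mono Set.inter_subset_right)
    have hsub2 : Δ ⊆ (Set.Ioc 0 T ∩ Δ) ∪ ({0} : Set ℝ) := by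
      intro x hx
      rcases hΔsub hx with ⟨hx1, hx2⟩
      rcases eq_or_lt_of_le hx1 with h | h
      · exact Or.inr (by simp [← h])
      · exact Or.inl ⟨⟨h, hx2⟩, hx⟩
    calc volume Δ ≤ volume ((Set.Ioc 0 T ∩ Δ) ∪ ({0} : Set ℝ)) := measure_mono hsub2
      _ ≤ volume (Set.Ioc 0 T ∩ Δ) + volume ({0} : Set ℝ) := measure_union_le _ _
      _ = volume (Set.Ioc 0 T ∩ Δ) := by simp
  have hconstΔ : ∀ c : ℝ, (∫ t in (0:ℝ)..T, Set.indicator Δ (fun _ => c) t) = δ * c := by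
    intro c
    rw [intervalIntegral.integral_of_le hT, MeasureTheory.setIntegral_indicator hΔmeas,
      MeasureTheory.setIntegral_const, MeasureTheory.measureReal_def, hIocΔ, ENNReal.toReal_ofReal hδ0, smul_eq_mul]
  have hA2 : (∫ t in (0:ℝ)..T, Set.indicator Δ id t)
      + (∫ t in (0:ℝ)..T, Set.indicator Δ id t) = T * δ := by
    have h1 : ∫ t in (0:ℝ)..T, Set.indicator Δ id (T - t) = ∫ t in (0:ℝ)..T, Set.indicator Δ id t := by
      have h := intervalIntegral.integral_comp_sub_left (Set.indicator Δ id) T (a := (0:ℝ)) (b := T)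
      simpa using h
    have h2 : ∀ t : ℝ, Set.indicator Δ id (T - t)
        = Set.indicator Δ (fun _ => T) t - Set.indicator Δ id t := by
      intro t
      by_cases hm : t ∈ Δ
      · rw [Set.indicator_of_mem ((hΔiff t).mpr hm), Set.indicator_of_mem hm,
          Set.indicator_of_mem hm]
        simp
      · rw [Set.indicator_of_notMem (fun hc => hm ((hΔiff t).mp hc)),
          Set.indicator_of_notMem hm, Set.indicator_of_notMem hm]
        simp
    have h3 : (∫ t in (0:ℝ)..T, Set.indicator Δ id (T - t))
        = ∫ t in (0:ℝ)..T, (Set.indicator Δ (fun _ => T) t - Set.indicator Δ id t) :=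
      intervalIntegral.integral_congr (fun t _ => h2 t)
    have h4 : (∫ t in (0:ℝ)..T, (Set.indicator Δ (fun _ => T) t - Set.indicator Δ id t))
        = (∫ t in (0:ℝ)..T, Set.indicator Δ (fun _ => T) t)
          - ∫ t in (0:ℝ)..T, Set.indicator Δ id t :=
      intervalIntegral.integral_sub (hindint _ continuousOn_const 0 T h0K hTK) hidint
    have h5 := hconstΔ T
    have e1 := h1.symm.trans (h3.trans h4)
    linarith [e1, h5]
  have hgrefl : ∀ x : ℝ, g (T - x) = δ - g x := by
    intro x
    have hpre : (fun y : ℝ => T - y) ⁻¹' (Δ ∩ Set.Iic (T - x)) = Δ ∩ Set.Ici x := by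
      ext y
      simp only [Set.mem_preimage, Set.mem_inter_iff, Set.mem_Iic, Set.mem_Ici]
      constructor
      · rintro ⟨h1, h2⟩
        exact ⟨(hΔiff y).mp h1, by linarith⟩
      · rintro ⟨h1, h2⟩
        exact ⟨(hΔiff y).mpr h1, by linarith⟩
    have h1 : volume (Δ ∩ Set.Iic (T - x)) = volume (Δ ∩ Set.Ici x) := by
      rw [← hrΔ.measure_preimage (hΔmeas.inter measurableSet_Iic).nullMeasurableSet, hpre]
    have h2 : volume (Δ ∩ Set.Iic x) + volume (Δ ∩ Set.Ici x) = ENNReal.ofReal δ := by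
      have hu : (Δ ∩ Set.Iic x) ∪ (Δ ∩ Set.Ici x) = Δ := by
        rw [← Set.inter_union_distrib_left]
        simp [Set.Iic_union_Ici]
      have hi : (Δ ∩ Set.Iic x) ∩ (Δ ∩ Set.Ici x) = Δ ∩ {x} := by
        ext y
        simp only [Set.mem_inter_iff, Set.mem_Iic, Set.mem_Ici, Set.mem_singleton_iff]
        constructor
        · rintro ⟨⟨hy1, hy2⟩, ⟨_, hy3⟩⟩
          exact ⟨hy1, le_antisymm hy2 hy3⟩
        · rintro ⟨hy1, hy2⟩
          exact ⟨⟨hy1, le_of_eq hy2⟩, hy1, ge_of_eq hy2⟩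
      have hmu := measure_union_add_inter (μ := volume) (t := Δ ∩ Set.Ici x)
        (Δ ∩ Set.Iic x) (hΔmeas.inter measurableSet_Ici)
      rw [hu, hi] at hmu
      have hnull : volume (Δ ∩ ({x} : Set ℝ)) = 0 :=
        measure_mono_null Set.inter_subset_right (by simp)
      rw [hnull, add_zero, hδ] at hmu
      exact hmu.symm
    have h3 : (volume (Δ ∩ Set.Iic x)).toReal + (volume (Δ ∩ Set.Ici x)).toReal = δ := by
      rw [← ENNReal.toReal_add (hgfin x) (hgfin' x), h2, ENNReal.toReal_ofReal hδ0]
    simp only [hgdef]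
    rw [h1]
    linarith
  have hB2 : (∫ t in (0:ℝ)..T, g t) + (∫ t in (0:ℝ)..T, g t) = T * δ := by
    have h1 : ∫ t in (0:ℝ)..T, g (T - t) = ∫ t in (0:ℝ)..T, g t := by
      have h := intervalIntegral.integral_comp_sub_left g T (a := (0:ℝ)) (b := T)
      simpa using h
    have h3 : (∫ t in (0:ℝ)..T, g (T - t)) = ∫ t in (0:ℝ)..T, (δ - g t) :=
      intervalIntegral.integral_congr (fun t _ => hgrefl t)
    have h4 : (∫ t in (0:ℝ)..T, (δ - g t)) = (∫ t in (0:ℝ)..T, (δ:ℝ)) - ∫ t in (0:ℝ)..T, g t :=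
      intervalIntegral.integral_sub intervalIntegrable_const hgint
    have h5 : (∫ t in (0:ℝ)..T, (δ:ℝ)) = T * δ := by
      rw [intervalIntegral.integral_const, smul_eq_mul]
      ring
    have e1 := h1.symm.trans (h3.trans h4)
    linarith [e1]
  -- assemble
  have hβval : (∫ t in (0:ℝ)..T, (4 * ε * J * Set.indicator Δ id t + 4 * ε * J * g t))
      = 2 * ε * J * (T * δ) + 2 * ε * J * (T * δ) := by
    have hA : (∫ t in (0:ℝ)..T, Set.indicator Δ id t) = T * δ / 2 := by linarith [hA2]
    have hB : (∫ t in (0:ℝ)..T, g t) = T * δ / 2 := by linarith [hB2]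
    rw [intervalIntegral.integral_add (hidint.const_mul _) (hgint.const_mul _),
      intervalIntegral.integral_const_mul, intervalIntegral.integral_const_mul, hA, hB]
    ring
  set I1 := ∫ s₁ in (0:ℝ)..T, ∫ s₂ in (0:ℝ)..s₁, (H s₁ * H s₂ - H s₂ * H s₁) with hI1
  have hsum : I1 + I1 = ∫ t in (0:ℝ)..T, ((H t * Φ t - Φ t * H t) + (Ψ t * G t - G t * Ψ t)) := by
    rw [step1]
    nth_rewrite 2 [step2.trans (step3.trans step4)]
    exact hdouble
  have hnormI1 : ‖I1‖ + ‖I1‖ ≤ 4 * ε * J * (T * δ) := by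
    have h1 : ‖I1 + I1‖ ≤ 4 * ε * J * (T * δ) := by
      rw [hsum]
      calc ‖∫ t in (0:ℝ)..T, ((H t * Φ t - Φ t * H t) + (Ψ t * G t - G t * Ψ t))‖
          ≤ ∫ t in (0:ℝ)..T, (4 * ε * J * Set.indicator Δ id t + 4 * ε * J * g t) := hnorm2
        _ = 2 * ε * J * (T * δ) + 2 * ε * J * (T * δ) := hβval
        _ = 4 * ε * J * (T * δ) := by ring
    have h2 : ‖I1 + I1‖ = ‖I1‖ + ‖I1‖ := by
      rw [show I1 + I1 = (2:ℝ) • I1 from (two_smul ℝ I1).symm, norm_smul, Real.norm_ofNat]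
      ring
    linarith [h1, h2]
  rw [norm_smul]
  have habs : ‖(-(1/2 : ℝ))‖ = 1/2 := by
    rw [Real.norm_eq_abs]
    norm_num
  rw [habs]
  nlinarith [hnormI1, mul_nonneg hJ0 hε0, mul_nonneg (mul_nonneg hJ0 hε0) hδ0,
    sub_nonneg.mpr hδT, mul_nonneg (mul_nonneg (mul_nonneg hJ0 hε0) hδ0) (sub_nonneg.mpr hδT),
    norm_nonneg I1]
end

section
/- Let A be a complex Banach algebra, let H_B ∈ A with ‖H_B‖ ≤ β, let H′ : [0,T] → A be continuous with ‖H′(t)‖ ≤ J for all t ∈ [0,T] (β, J ≥ 0, T ≥ 0), and let n ≥ 1. Then the n-th order time-ordered (Dyson) integral satisfies ‖ ∫_{0 ≤ t_n ≤ … ≤ t₁ ≤ T} (H_B + H′(t₁))(H_B + H′(t₂))⋯(H_B + H′(t_n)) dt₁⋯dt_n − (Tⁿ/n!) H_Bⁿ ‖ ≤ (Tⁿ/n!) ((β + J)ⁿ − βⁿ) ≤ (1/(n−1)!) (JT) ((β+J)T)^{n−1}, where the last step uses the convexity inequality (β+J)ⁿ − βⁿ ≤ nJ(β+J)^{n−1}.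 -/
open MeasureTheory

lemma perm_eq_one_of_strictMono {n : ℕ} (π : Equiv.Perm (Fin n)) (h : StrictMono π) : π = 1 := by
  have hle : ∀ i, i ≤ π i := fun i =>
    @StrictMono.le_apply (Fin n) inferInstance (inferInstance : WellFoundedLT (Fin n)) _ h i
  have hsum : ∑ i, ((π i : ℕ)) = ∑ i : Fin n, (i : ℕ) := Fintype.sum_equiv π _ _ (fun _ => rfl)
  have := (Finset.sum_eq_sum_iff_of_le (f := fun i : Fin n => (i:ℕ)) (g := fun i : Fin n => (π i : ℕ))
      (fun i _ => hle i)).mp hsum.symm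
  ext i
  exact (this i (Finset.mem_univ i)).symm

lemma measurableSet_orderedSimplex (n : ℕ) (T : ℝ) :
    MeasurableSet {t : Fin n → ℝ | (∀ i, t i ∈ Set.Icc (0:ℝ) T) ∧ ∀ i j : Fin n, i ≤ j → t j ≤ t i} := by
  have : {t : Fin n → ℝ | (∀ i, t i ∈ Set.Icc (0:ℝ) T) ∧ ∀ i j : Fin n, i ≤ j → t j ≤ t i}
      = {t : Fin n → ℝ | ∀ i, t i ∈ Set.Icc (0:ℝ) T} ∩ {t | ∀ i j : Fin n, i ≤ j → t j ≤ t i} := rfl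
  rw [this]
  apply MeasurableSet.inter
  · rw [Set.setOf_forall]
    exact MeasurableSet.iInter fun i => (measurable_pi_apply i) measurableSet_Icc
  · rw [Set.setOf_forall]
    refine MeasurableSet.iInter fun i => ?_
    rw [Set.setOf_forall]
    refine MeasurableSet.iInter fun j => ?_
    rcases le_or_gt i j with hij | hij
    · simp only [hij, forall_true_left]
      exact measurableSet_le (measurable_pi_apply j) (measurable_pi_apply i)
    · have : {t : Fin n → ℝ | i ≤ j → t j ≤ t i} = Set.univ := by
        ext t; simp [not_le.mpr hij]
      rw [this]; exact MeasurableSet.univ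

lemma isClosed_orderedSimplex (n : ℕ) (T : ℝ) :
    IsClosed {t : Fin n → ℝ | (∀ i, t i ∈ Set.Icc (0:ℝ) T) ∧ ∀ i j : Fin n, i ≤ j → t j ≤ t i} := by
  have : {t : Fin n → ℝ | (∀ i, t i ∈ Set.Icc (0:ℝ) T) ∧ ∀ i j : Fin n, i ≤ j → t j ≤ t i}
      = {t : Fin n → ℝ | ∀ i, t i ∈ Set.Icc (0:ℝ) T} ∩ {t | ∀ i j : Fin n, i ≤ j → t j ≤ t i} := rfl
  rw [this]
  apply IsClosed.inter
  · rw [Set.setOf_forall]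
    exact isClosed_iInter fun i => IsClosed.preimage (continuous_apply i) isClosed_Icc
  · rw [Set.setOf_forall]
    refine isClosed_iInter fun i => ?_
    rw [Set.setOf_forall]
    refine isClosed_iInter fun j => ?_
    rcases le_or_gt i j with hij | hij
    · simp only [hij, forall_true_left]
      exact isClosed_le (continuous_apply j) (continuous_apply i)
    · have : {t : Fin n → ℝ | i ≤ j → t j ≤ t i} = Set.univ := by
        ext t; simp [not_le.mpr hij]
      rw [this]; exact isClosed_univ

lemma volume_orderedSimplex (n : ℕ) (T : ℝ) (hT : 0 ≤ T) :
    volume {t : Fin n → ℝ | (∀ i, t i ∈ Set.Icc (0:ℝ) T) ∧ ∀ i j : Fin n, i ≤ j → t j ≤ t i}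
      = ENNReal.ofReal (T ^ n / n.factorial) := by
  set S : Set (Fin n → ℝ) := {t | (∀ i, t i ∈ Set.Icc (0:ℝ) T) ∧ ∀ i j : Fin n, i ≤ j → t j ≤ t i}
    with hSdef
  have hSm : MeasurableSet S := measurableSet_orderedSimplex n T
  set Sσ : Equiv.Perm (Fin n) → Set (Fin n → ℝ) := fun σ => (fun t => t ∘ σ) ⁻¹' S with hSσdef
  have hmeas : ∀ σ : Equiv.Perm (Fin n), Measurable (fun t : Fin n → ℝ => t ∘ σ) :=
    fun σ => measurable_pi_lambda _ fun i => measurable_pi_apply (σ i)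
  have hσm : ∀ σ, MeasurableSet (Sσ σ) := fun σ => (hmeas σ) hSm
  have hvol : ∀ σ, volume (Sσ σ) = volume S := by
    intro σ
    have h := (volume_measurePreserving_piCongrLeft (fun _ : Fin n => ℝ) σ).symm
    have he : ⇑(MeasurableEquiv.piCongrLeft (fun _ : Fin n => ℝ) σ).symm = fun t => t ∘ σ := by
      ext t i; simp [MeasurableEquiv.piCongrLeft, Equiv.piCongrLeft]
    have := h.measure_preimage hSm.nullMeasurableSet
    rwa [he] at this
  have hunion : (⋃ σ, Sσ σ) = Set.pi Set.univ (fun _ : Fin n => Set.Icc (0:ℝ) T) := by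
    ext t
    simp only [Set.mem_iUnion, Set.mem_pi, Set.mem_univ, forall_true_left]
    constructor
    · rintro ⟨σ, hσ⟩ i
      have := hσ.1 (σ.symm i)
      simpa using this
    · intro ht
      refine ⟨(Fin.revPerm).trans (Tuple.sort t), ⟨fun i => ht _, fun i j hij => ?_⟩⟩
      exact Tuple.monotone_sort t (Fin.rev_le_rev.mpr hij)
  have hnull : ∀ i j : Fin n, i ≠ j → volume {t : Fin n → ℝ | t i = t j} = 0 := by
    intro i j hij
    have : {t : Fin n → ℝ | t i = t j} = (LinearMap.ker ((LinearMap.proj i : (Fin n → ℝ) →ₗ[ℝ] ℝ) - LinearMap.proj j) : Submodule ℝ (Fin n → ℝ)) := by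
      ext t; simp [LinearMap.mem_ker, sub_eq_zero]
    rw [this]
    apply Measure.addHaar_submodule
    intro h
    have h1 : (Pi.single i 1 : Fin n → ℝ) ∈ LinearMap.ker ((LinearMap.proj i : (Fin n → ℝ) →ₗ[ℝ] ℝ) - LinearMap.proj j) := h ▸ Submodule.mem_top
    simp [LinearMap.mem_ker, Pi.single_apply, hij, hij.symm] at h1
  have hdisj : Pairwise (Function.onFun (AEDisjoint volume) Sσ) := by
    intro σ τ hστ
    have hsub : Sσ σ ∩ Sσ τ ⊆ ⋃ (i : Fin n), ⋃ (j : Fin n), ⋃ (_ : i ≠ j), {t : Fin n → ℝ | t i = t j} := by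
      rintro t ⟨htσ, htτ⟩
      by_contra hN
      simp only [Set.mem_iUnion, Set.mem_setOf_eq, not_exists] at hN
      have hinj : Function.Injective t := by
        intro a b hab
        by_contra hne
        exact hN a b hne hab
      have hanti : ∀ (ρ : Equiv.Perm (Fin n)), (∀ i j : Fin n, i ≤ j → t (ρ j) ≤ t (ρ i)) →
          ∀ i j : Fin n, i < j → t (ρ j) < t (ρ i) := by
        intro ρ hρ i j hij
        refine lt_of_le_of_ne (hρ i j hij.le) fun heq => ?_
        exact absurd (ρ.injective (hinj heq)) hij.ne'
      have hσ' := hanti σ htσ.2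
      have hτ' := hanti τ htτ.2
      set π : Equiv.Perm (Fin n) := τ.trans σ.symm with hπdef
      have hπmono : StrictMono π := by
        intro i j hij
        by_contra hle
        push_neg at hle
        rcases lt_or_eq_of_le hle with hlt | heq
        · have h1 : t (σ (π i)) < t (σ (π j)) := hσ' _ _ hlt
          have h2 : t (τ j) < t (τ i) := hτ' _ _ hij
          simp only [hπdef, Equiv.trans_apply, Equiv.apply_symm_apply] at h1
          linarith
        · have hττ : τ j = τ i := σ.symm.injective (by simpa [hπdef] using heq)
          exact absurd (τ.injective hττ) hij.ne'
      have : π = 1 := perm_eq_one_of_strictMono π hπmono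
      apply hστ
      refine Equiv.ext fun i => ?_
      have h1 := congrArg (fun ρ : Equiv.Perm (Fin n) => σ (ρ i)) this
      simpa [hπdef] using h1.symm
    refine measure_mono_null hsub ?_
    refine measure_iUnion_null fun i => measure_iUnion_null fun j => ?_
    by_cases hij : i = j
    · simp [hij]
    · simpa [hij] using hnull i j hij
  have hcube : volume (Set.pi Set.univ (fun _ : Fin n => Set.Icc (0:ℝ) T)) = ENNReal.ofReal T ^ n := by
    rw [volume_pi_pi]
    simp [Real.volume_Icc]
  have hsum : volume (⋃ σ, Sσ σ) = (n.factorial : ENNReal) * volume S := by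
    rw [measure_iUnion₀ hdisj fun σ => (hσm σ).nullMeasurableSet]
    rw [tsum_fintype]
    simp only [hvol]
    rw [Finset.sum_const, Finset.card_univ, Fintype.card_perm]
    simp [nsmul_eq_mul]
  have key : (n.factorial : ENNReal) * volume S = ENNReal.ofReal T ^ n := by
    rw [← hsum, hunion, hcube]
  have hfac0 : (n.factorial : ENNReal) ≠ 0 := Nat.cast_ne_zero.mpr n.factorial_ne_zero
  have hfact : (n.factorial : ENNReal) ≠ ⊤ := ENNReal.natCast_ne_top _
  have : volume S = ENNReal.ofReal T ^ n / (n.factorial : ENNReal) := by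
    rw [ENNReal.eq_div_iff hfac0 hfact, ← key]
  rw [this, ← ENNReal.ofReal_pow hT, ← ENNReal.ofReal_natCast, ← ENNReal.ofReal_div_of_pos]
  exact Nat.cast_pos.mpr n.factorial_pos

lemma list_prod_sub_pow_norm {A : Type*} [NormedRing A] (c : A) (β J : ℝ)
    (hβ : 0 ≤ β) (hJ : 0 ≤ J) (hc : ‖c‖ ≤ β) :
    ∀ (l : List A), (∀ a ∈ l, ‖a - c‖ ≤ J) → ‖l.prod - c ^ l.length‖ ≤ (β + J) ^ l.length - β ^ l.length := by
  intro l
  induction l with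
  | nil => simp
  | cons a l ih =>
    intro h
    have ha : ‖a - c‖ ≤ J := h a (List.mem_cons_self)
    have hl := ih (fun b hb => h b (List.mem_cons_of_mem a hb))
    have hanorm : ‖a‖ ≤ β + J := by
      calc ‖a‖ = ‖a - c + c‖ := by rw [sub_add_cancel]
        _ ≤ ‖a - c‖ + ‖c‖ := norm_add_le _ _
        _ ≤ J + β := add_le_add ha hc
        _ = β + J := by ring
    have key : (a :: l).prod - c ^ (a :: l).length
        = a * (l.prod - c ^ l.length) + (a - c) * c ^ l.length := by
      simp only [List.prod_cons, List.length_cons, pow_succ']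
      noncomm_ring
    rw [key]
    rcases Nat.eq_zero_or_pos l.length with h0 | hpos
    · have hlnil : l = [] := List.length_eq_zero_iff.mp h0
      subst hlnil
      simp only [List.prod_nil, List.length_nil, pow_zero, sub_self, mul_zero, mul_one, zero_add,
        List.length_cons, pow_one]
      calc ‖a - c‖ ≤ J := ha
        _ ≤ β + J - β := le_of_eq (by ring)
    · have hck : ‖c ^ l.length‖ ≤ β ^ l.length :=
        (norm_pow_le' c hpos).trans (pow_le_pow_left₀ (norm_nonneg c) hc _)
      have hnn : (0:ℝ) ≤ (β + J) ^ l.length - β ^ l.length := by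
        have := pow_le_pow_left₀ hβ (by linarith : β ≤ β + J) l.length
        linarith
      calc ‖a * (l.prod - c ^ l.length) + (a - c) * c ^ l.length‖
          ≤ ‖a * (l.prod - c ^ l.length)‖ + ‖(a - c) * c ^ l.length‖ := norm_add_le _ _
        _ ≤ ‖a‖ * ‖l.prod - c ^ l.length‖ + ‖a - c‖ * ‖c ^ l.length‖ :=
            add_le_add (norm_mul_le _ _) (norm_mul_le _ _)
        _ ≤ (β + J) * ((β + J) ^ l.length - β ^ l.length) + J * β ^ l.length := by
            apply add_le_add
            · exact mul_le_mul hanorm hl (norm_nonneg _) (by linarith)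
            · exact mul_le_mul ha hck (norm_nonneg _) hJ
        _ = (β + J) ^ (a :: l).length - β ^ (a :: l).length := by
            simp [List.length_cons, pow_succ]
            ring

lemma contOn_listProd {A : Type*} [NormedRing A] {X : Type*} [TopologicalSpace X]
    {s : Set X} : ∀ (m : ℕ) (g : Fin m → X → A), (∀ i, ContinuousOn (g i) s) →
    ContinuousOn (fun t => (List.ofFn fun i => g i t).prod) s := by
  intro m
  induction m with
  | zero => intro g hg; simp; exact continuousOn_const
  | succ m ih =>
    intro g hg
    have : (fun t => (List.ofFn fun i => g i t).prod)
        = fun t => g 0 t * (List.ofFn fun i : Fin m => g i.succ t).prod := by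
      funext t; rw [List.ofFn_succ]; simp
    rw [this]
    exact (hg 0).mul (ih _ fun i => hg i.succ)

lemma pow_sub_pow_le_convex (m : ℕ) : ∀ a b : ℝ, 0 ≤ b → b ≤ a →
    a ^ (m+1) - b ^ (m+1) ≤ (m+1) * (a - b) * a ^ m := by
  induction m with
  | zero => intro a b _ _; norm_num
  | succ m ih =>
    intro a b hb hba
    have hIH := ih a b hb hba
    have hpow : b ^ (m+1) ≤ a ^ (m+1) := pow_le_pow_left₀ hb hba _
    have hpowm : b ^ m ≤ a ^ m := pow_le_pow_left₀ hb hba _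
    have ha : 0 ≤ a := hb.trans hba
    have hbp : 0 ≤ b ^ (m+1) := pow_nonneg hb _
    have hap : 0 ≤ a ^ m := pow_nonneg ha _
    have key : a ^ (m+2) - b ^ (m+2) = a * (a ^ (m+1) - b ^ (m+1)) + (a - b) * b ^ (m+1) := by ring
    rw [key]
    have h1 : a * (a ^ (m+1) - b ^ (m+1)) ≤ a * ((m+1) * (a - b) * a ^ m) :=
      mul_le_mul_of_nonneg_left hIH ha
    have h2 : (a - b) * b ^ (m+1) ≤ (a - b) * a ^ (m+1) :=
      mul_le_mul_of_nonneg_left hpow (by linarith)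
    have : a * ((m+1) * (a - b) * a ^ m) = ((m+1) : ℝ) * (a - b) * a ^ (m+1) := by ring
    push_cast
    nlinarith [h1, h2, this]

/-- Bound on the `n`-th order time-ordered (Dyson) integral.  With `‖H_B‖ ≤ β` and
`‖H' t‖ ≤ J` on `[0,T]`, the integral over the ordered simplex
`0 ≤ tₙ ≤ ⋯ ≤ t₁ ≤ T` of the ordered product `(H_B + H'(t₁)) ⋯ (H_B + H'(tₙ))` deviates from
the pure-bath term `(Tⁿ/n!) H_Bⁿ` by at most `(Tⁿ/n!)((β+J)ⁿ - βⁿ)`, which is itself at most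
`(1/(n-1)!)(JT)((β+J)T)^{n-1}`. -/
theorem dyson_nth_order_bound
    {A : Type*} [NormedRing A] [NormedAlgebra ℂ A] [CompleteSpace A]
    (n : ℕ) (hn : 1 ≤ n) (T β J : ℝ) (hT : 0 ≤ T) (hβ : 0 ≤ β) (hJ : 0 ≤ J)
    (H_B : A) (hHB : ‖H_B‖ ≤ β)
    (H' : ℝ → A) (hcont : ContinuousOn H' (Set.Icc 0 T))
    (hbound : ∀ t ∈ Set.Icc (0:ℝ) T, ‖H' t‖ ≤ J) :
    ‖(∫ t in {t : Fin n → ℝ | (∀ i, t i ∈ Set.Icc (0:ℝ) T) ∧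
          ∀ i j : Fin n, i ≤ j → t j ≤ t i},
        (List.ofFn (fun i => H_B + H' (t i))).prod)
      - (T^n / n.factorial) • H_B^n‖
      ≤ T^n / n.factorial * ((β + J)^n - β^n) ∧
    T^n / n.factorial * ((β + J)^n - β^n)
      ≤ (1 / (n-1).factorial) * (J*T) * ((β+J)*T)^(n-1) := by
  constructor
  · set S : Set (Fin n → ℝ) := {t | (∀ i, t i ∈ Set.Icc (0:ℝ) T) ∧
        ∀ i j : Fin n, i ≤ j → t j ≤ t i} with hSdef
    set f : (Fin n → ℝ) → A := fun t => (List.ofFn (fun i => H_B + H' (t i))).prod with hfdef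
    have hvolS : volume S = ENNReal.ofReal (T ^ n / n.factorial) := volume_orderedSimplex n T hT
    have hmeasS : MeasurableSet S := measurableSet_orderedSimplex n T
    have hfin : volume S < ⊤ := by rw [hvolS]; exact ENNReal.ofReal_lt_top
    have hcubeC : IsCompact (Set.pi Set.univ fun _ : Fin n => Set.Icc (0:ℝ) T) :=
      isCompact_univ_pi fun _ => isCompact_Icc
    have hcomp : IsCompact S :=
      hcubeC.of_isClosed_subset (isClosed_orderedSimplex n T) (fun t ht i _ => ht.1 i)
    have hContOn : ContinuousOn f S :=
      contOn_listProd n (fun i (t : Fin n → ℝ) => H_B + H' (t i))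
        (fun i => continuousOn_const.add (hcont.comp ((continuous_apply i).continuousOn)
          (fun t ht => ht.1 i)))
    have hInt : IntegrableOn f S volume := hContOn.integrableOn_compact hcomp
    have hIntConst : IntegrableOn (fun _ : Fin n → ℝ => H_B ^ n) S volume :=
      (integrableOn_const_iff (by finiteness)).mpr (Or.inr hfin)
    have htoReal : (volume S).toReal = T ^ n / n.factorial := by
      rw [hvolS, ENNReal.toReal_ofReal (by positivity)]
    have hc : (T ^ n / (n.factorial : ℝ)) • H_B ^ n = ∫ _ in S, H_B ^ n ∂volume := by
      rw [setIntegral_const, measureReal_def, htoReal]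
    rw [hc, ← integral_sub hInt hIntConst]
    have hbd : ∀ t ∈ S, ‖f t - H_B ^ n‖ ≤ (β + J) ^ n - β ^ n := by
      intro t ht
      have hlen : (List.ofFn (fun i => H_B + H' (t i))).length = n := List.length_ofFn
      have := list_prod_sub_pow_norm H_B β J hβ hJ hHB (List.ofFn (fun i => H_B + H' (t i))) ?_
      · rwa [hlen] at this
      · intro a ha
        obtain ⟨i, rfl⟩ := List.mem_ofFn.mp ha
        simp only [add_sub_cancel_left]
        exact hbound (t i) (ht.1 i)
    calc ‖∫ t in S, (f t - H_B ^ n) ∂volume‖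
        ≤ ((β + J) ^ n - β ^ n) * (volume S).toReal :=
          norm_setIntegral_le_of_norm_le_const hfin hbd
      _ = T ^ n / n.factorial * ((β + J) ^ n - β ^ n) := by rw [htoReal]; ring
  · obtain ⟨m, rfl⟩ : ∃ m, n = m + 1 := ⟨n - 1, (Nat.succ_pred_eq_of_pos hn).symm⟩
    have h1 : (β + J) ^ (m+1) - β ^ (m+1) ≤ (m+1) * ((β+J) - β) * (β+J) ^ m :=
      pow_sub_pow_le_convex m (β + J) β hβ (by linarith)
    have h1' : (β + J) ^ (m+1) - β ^ (m+1) ≤ (m+1) * J * (β+J) ^ m := by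
      calc (β + J) ^ (m+1) - β ^ (m+1) ≤ (m+1) * ((β+J) - β) * (β+J) ^ m := h1
        _ = (m+1) * J * (β+J) ^ m := by ring
    have hpos : (0:ℝ) ≤ T ^ (m+1) / (m+1).factorial := by positivity
    calc T ^ (m+1) / (m+1).factorial * ((β + J) ^ (m+1) - β ^ (m+1))
        ≤ T ^ (m+1) / (m+1).factorial * ((m+1) * J * (β+J) ^ m) :=
          mul_le_mul_of_nonneg_left h1' hpos
      _ = (1 / (m+1-1).factorial) * (J*T) * ((β+J)*T) ^ (m+1-1) := by
          simp only [Nat.add_sub_cancel]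
          rw [Nat.factorial_succ, mul_pow]
          push_cast
          have hzero : ((m:ℝ)+1) ≠ 0 := by positivity
          have hfaczero : ((m.factorial : ℝ)) ≠ 0 := Nat.cast_ne_zero.mpr m.factorial_ne_zero
          field_simp
          ring
end

section
/- Let A be a complex Banach algebra, let A : [0,∞) → A be continuous with ‖A(t)‖ ≤ ε for all t, and suppose A(t) = A_B(t) + A′(t) where A_B(t) commutes with A_B(s) for all s, t (e.g. A_B(t) = ±(−i)H_B for a fixed H_B) and ‖A′(t)‖ ≤ J with J ≤ ε, so that ‖[A(s), A(t)]‖ ≤ 4Jε for all s, t. Define families Ω_n : [0,∞) → A and S_n^{(j)} : [0,∞) → A by: Ω₁(t) = ∫_0^t A(s) ds; Ω_n(t) = ∑_{j=1}^{n−1} (B_j/j!) ∫_0^t S_n^{(j)}(s) ds for n ≥ 2; S_n^{(1)}(t) = [Ω_{n−1}(t), A(t)]; and S_n^{(j)}(t) = ∑_{m=1}^{n−j} [Ω_m(t), S_{n−m}^{(j−1)}(t)] for 2 ≤ j ≤ n−1, where B_j are the Bernoulli numbers. Define coefficients f_n^{(j)} recursively by f₁^{(0)} = 1, f_n^{(0)}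 = 0 for n > 1, and f_n^{(j)} = 2 ∑_{m=1}^{n−j} ∑_{p=0}^{m−1} (|B_p|/(p! m)) f_m^{(p)} f_{n−m}^{(j−1)} for n ≥ 2. Then for all n ≥ 2, all 1 ≤ j ≤ n−1, and all t ≥ 0: ‖S_n^{(j)}(t)‖ ≤ f_n^{(j)} · J · (2εt)^{n−1}. -/
open scoped BigOperators

/-- Bounds for the `S_n^{(j)}` operators in the recursive generation of the Magnus
expansion.  With `A t = A_B t + A' t`, where the `A_B` commute among themselves, `‖A t‖ ≤ ε`,
`‖A' t‖ ≤ J ≤ ε`, so that `‖[A s, A t]‖ ≤ 4Jε`, and with `Ωₙ`, `S_n^{(j)}` defined by the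
standard Magnus recursion and coefficients `f_n^{(j)}` defined by the recursion of the paper,
one has `‖S_n^{(j)}(t)‖ ≤ f_n^{(j)} J (2εt)^{n-1}` for all `n ≥ 2`, `1 ≤ j ≤ n-1`, `t ≥ 0`. -/
theorem magnus_Snj_bound
    {𝔸 : Type*} [NormedRing 𝔸] [NormedAlgebra ℂ 𝔸] [CompleteSpace 𝔸]
    (ε J : ℝ) (hJ : 0 ≤ J) (hJε : J ≤ ε)
    (A A_B A' : ℝ → 𝔸)
    (hAcont : ContinuousOn A (Set.Ici 0))
    (hAbound : ∀ t : ℝ, 0 ≤ t → ‖A t‖ ≤ ε)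
    (hdecomp : ∀ t, A t = A_B t + A' t)
    (hABcomm : ∀ s t, A_B s * A_B t = A_B t * A_B s)
    (hA'bound : ∀ t : ℝ, 0 ≤ t → ‖A' t‖ ≤ J)
    (hcommbound : ∀ s t : ℝ, 0 ≤ s → 0 ≤ t →
      ‖A s * A t - A t * A s‖ ≤ 4 * J * ε)
    (Ω : ℕ → ℝ → 𝔸) (S : ℕ → ℕ → ℝ → 𝔸)
    (hΩ1 : ∀ t, Ω 1 t = ∫ s in (0:ℝ)..t, A s)
    (hΩn : ∀ n, 2 ≤ n → ∀ t, Ω n t =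
      ∑ j ∈ Finset.Icc 1 (n-1),
        ((bernoulli j : ℝ) / j.factorial) • ∫ s in (0:ℝ)..t, S n j s)
    (hS1 : ∀ n, 2 ≤ n → ∀ t, S n 1 t = Ω (n-1) t * A t - A t * Ω (n-1) t)
    (hSj : ∀ n j, 2 ≤ j → j ≤ n - 1 → ∀ t,
      S n j t = ∑ m ∈ Finset.Icc 1 (n-j),
        (Ω m t * S (n-m) (j-1) t - S (n-m) (j-1) t * Ω m t))
    (f : ℕ → ℕ → ℝ)
    (hf10 : f 1 0 = 1)
    (hfn0 : ∀ n, 1 < n → f n 0 = 0)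
    (hfnj : ∀ n j, 2 ≤ n → 1 ≤ j → j ≤ n - 1 →
      f n j = 2 * ∑ m ∈ Finset.Icc 1 (n-j), ∑ p ∈ Finset.range m,
        (|(bernoulli p : ℝ)| / (p.factorial * m)) * f m p * f (n-m) (j-1)) :
    ∀ n j, 2 ≤ n → 1 ≤ j → j ≤ n - 1 → ∀ t : ℝ, 0 ≤ t →
      ‖S n j t‖ ≤ f n j * J * (2 * ε * t)^(n-1) := by
  have hε : 0 ≤ ε := hJ.trans hJε
  -- nonnegativity of f on the valid index range
  have fnonneg : ∀ n, ∀ j, 1 ≤ n → j ≤ n - 1 → 0 ≤ f n j := by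
    intro n
    induction n using Nat.strong_induction_on with
    | _ n ih =>
      intro j hn hj
      rcases Nat.eq_zero_or_pos j with rfl | hj1
      · rcases Nat.lt_or_ge n 2 with h | h
        · have hn1 : n = 1 := by omega
          rw [hn1, hf10]; norm_num
        · rw [hfn0 n (by omega)]
      · have hn2 : 2 ≤ n := by omega
        rw [hfnj n j hn2 hj1 hj]
        apply mul_nonneg (by norm_num)
        apply Finset.sum_nonneg
        intro m hm
        simp only [Finset.mem_Icc] at hm
        apply Finset.sum_nonneg
        intro p hp
        simp only [Finset.mem_range] at hp
        have h1 : 0 ≤ f m p := ih m (by omega) p (by omega) (by omega)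
        have h2 : 0 ≤ f (n - m) (j - 1) := ih (n - m) (by omega) (j - 1) (by omega) (by omega)
        have h3 : (0:ℝ) ≤ |(bernoulli p : ℝ)| / (p.factorial * m) := by positivity
        exact mul_nonneg (mul_nonneg h3 h1) h2
  set g : ℕ → ℝ := fun m => ∑ p ∈ Finset.range m,
      (|(bernoulli p : ℝ)| / (p.factorial * m)) * f m p with hg
  have gnonneg : ∀ m, 1 ≤ m → 0 ≤ g m := by
    intro m hm
    simp only [hg]
    apply Finset.sum_nonneg
    intro p hp
    simp only [Finset.mem_range] at hp
    exact mul_nonneg (by positivity) (fnonneg m p hm (by omega))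
  have g1 : g 1 = 1 := by
    simp only [hg]
    norm_num [Finset.sum_range_one, hf10]
  -- f n 1 = 2 * g (n-1)
  have hfn1 : ∀ n, 2 ≤ n → f n 1 = 2 * g (n - 1) := by
    intro n hn
    rw [hfnj n 1 hn le_rfl (by omega)]
    congr 1
    rw [Finset.sum_eq_single (n - 1)]
    · have h1 : n - (n - 1) = 1 := by omega
      rw [h1]
      simp only [hg]
      rw [← Finset.sum_mul, hf10, mul_one]
    · intro m hm hne
      simp only [Finset.mem_Icc] at hm
      rw [← Finset.sum_mul, hfn0 (n - m) (by omega), mul_zero]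
    · intro h
      simp only [Finset.mem_Icc] at h
      omega
  -- f n j = 2 * ∑ g m * f (n-m) (j-1) for 2 ≤ j
  have hfnj' : ∀ n j, 2 ≤ n → 1 ≤ j → j ≤ n - 1 →
      f n j = 2 * ∑ m ∈ Finset.Icc 1 (n - j), g m * f (n - m) (j - 1) := by
    intro n j hn hj1 hj2
    rw [hfnj n j hn hj1 hj2]
    congr 1
    apply Finset.sum_congr rfl
    intro m hm
    simp only [hg]
    rw [← Finset.sum_mul]
  -- commutator norm bound
  have commnorm : ∀ x y : 𝔸, ‖x * y - y * x‖ ≤ 2 * (‖x‖ * ‖y‖) := by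
    intro x y
    calc ‖x * y - y * x‖ ≤ ‖x * y‖ + ‖y * x‖ := norm_sub_le _ _
      _ ≤ ‖x‖ * ‖y‖ + ‖y‖ * ‖x‖ := add_le_add (norm_mul_le _ _) (norm_mul_le _ _)
      _ = 2 * (‖x‖ * ‖y‖) := by ring
  -- bound on Ω 1
  have hΩ1b : ∀ t : ℝ, 0 ≤ t → ‖Ω 1 t‖ ≤ ε * t := by
    intro t ht
    rw [hΩ1 t]
    have := intervalIntegral.norm_integral_le_of_norm_le_const (a := 0) (b := t) (C := ε)
      (f := A) (fun s hs => by
        rw [Set.uIoc_of_le ht] at hs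
        exact hAbound s hs.1.le)
    simpa [abs_of_nonneg ht] using this
  -- bound of the integral of S n j given pointwise bounds at level n
  have intS : ∀ n, 2 ≤ n →
      (∀ j, 1 ≤ j → j ≤ n - 1 → ∀ s : ℝ, 0 ≤ s → ‖S n j s‖ ≤ f n j * J * (2 * ε * s)^(n-1)) →
      ∀ j, 1 ≤ j → j ≤ n - 1 → ∀ t : ℝ, 0 ≤ t →
        ‖∫ s in (0:ℝ)..t, S n j s‖ ≤ f n j * J * (2 * ε)^(n-1) * t^n / n := by
    intro n hn hSb j hj1 hj2 t ht
    have hfpos : 0 ≤ f n j := fnonneg n j (by omega) hj2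
    have key := intervalIntegral.norm_integral_le_of_norm_le
      (μ := MeasureTheory.volume) (a := 0) (b := t) (f := fun s => S n j s)
      (g := fun s => f n j * J * (2 * ε * s)^(n-1))
      ht
      (Filter.Eventually.of_forall (fun s hs => hSb j hj1 hj2 s hs.1.le))
      ((Continuous.intervalIntegrable (by fun_prop) 0 t))
    have hval : ∫ s in (0:ℝ)..t, f n j * J * (2 * ε * s)^(n-1)
        = f n j * J * (2 * ε)^(n-1) * t^n / n := by
      have h1 : ∀ s : ℝ, f n j * J * (2 * ε * s)^(n-1)
          = (f n j * J * (2 * ε)^(n-1)) * s^(n-1) := by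
        intro s; rw [mul_pow]; ring
      simp_rw [h1]
      rw [intervalIntegral.integral_const_mul, integral_pow]
      have h2 : n - 1 + 1 = n := by omega
      rw [h2, zero_pow (by omega : n ≠ 0)]
      have h3 : ((n - 1 : ℕ) : ℝ) + 1 = (n : ℝ) := by
        rw [Nat.cast_sub (by omega : 1 ≤ n)]; push_cast; ring
      rw [h3]; ring
    rw [hval] at key
    calc ‖∫ s in (0:ℝ)..t, S n j s‖ ≤ |f n j * J * (2 * ε)^(n-1) * t^n / n| := key.trans (le_abs_self _)
      _ = f n j * J * (2 * ε)^(n-1) * t^n / n := by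
        apply abs_of_nonneg
        apply div_nonneg _ (by positivity)
        exact mul_nonneg (mul_nonneg (mul_nonneg hfpos hJ) (by positivity)) (by positivity)
  -- bound on Ω n for n ≥ 2, given pointwise bounds on S n j
  have hΩb : ∀ n, 2 ≤ n →
      (∀ j, 1 ≤ j → j ≤ n - 1 → ∀ s : ℝ, 0 ≤ s → ‖S n j s‖ ≤ f n j * J * (2 * ε * s)^(n-1)) →
      ∀ t : ℝ, 0 ≤ t → ‖Ω n t‖ ≤ g n * J * (2 * ε)^(n-1) * t^n := by
    intro n hn hSb t ht
    rw [hΩn n hn t]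
    refine le_trans (norm_sum_le _ _) ?_
    have per : ∀ j ∈ Finset.Icc 1 (n - 1),
        ‖((bernoulli j : ℝ) / j.factorial) • ∫ s in (0:ℝ)..t, S n j s‖
          ≤ (|(bernoulli j : ℝ)| / (j.factorial * n) * f n j) * (J * (2 * ε)^(n-1) * t^n) := by
      intro j hj
      simp only [Finset.mem_Icc] at hj
      rw [norm_smul]
      have h1 : ‖(bernoulli j : ℝ) / j.factorial‖ = |(bernoulli j : ℝ)| / j.factorial := by
        rw [Real.norm_eq_abs, abs_div, Nat.abs_cast]
      rw [h1]
      calc |(bernoulli j : ℝ)| / j.factorial * ‖∫ s in (0:ℝ)..t, S n j s‖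
          ≤ |(bernoulli j : ℝ)| / j.factorial * (f n j * J * (2 * ε)^(n-1) * t^n / n) := by
            apply mul_le_mul_of_nonneg_left (intS n hn hSb j hj.1 hj.2 t ht) (by positivity)
        _ = (|(bernoulli j : ℝ)| / (j.factorial * n) * f n j) * (J * (2 * ε)^(n-1) * t^n) := by
            have hn0 : (n : ℝ) ≠ 0 := by positivity
            field_simp
    refine le_trans (Finset.sum_le_sum per) ?_
    have hgn : g n = ∑ j ∈ Finset.Icc 1 (n - 1),
        |(bernoulli j : ℝ)| / (j.factorial * n) * f n j := by
      simp only [hg]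
      have hrange : Finset.range n = insert 0 (Finset.Icc 1 (n - 1)) := by
        ext x; simp only [Finset.mem_range, Finset.mem_insert, Finset.mem_Icc]; omega
      rw [hrange, Finset.sum_insert (by simp)]
      rw [hfn0 n (by omega), mul_zero, zero_add]
    rw [← Finset.sum_mul, ← hgn]
    apply le_of_eq; ring
  -- main claim by strong induction
  have main : ∀ n, ∀ j, 2 ≤ n → 1 ≤ j → j ≤ n - 1 → ∀ t : ℝ, 0 ≤ t →
      ‖S n j t‖ ≤ f n j * J * (2 * ε * t)^(n-1) := by
    intro n
    induction n using Nat.strong_induction_on with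
    | _ n ih =>
      intro j hn hj1 hj2 t ht
      have Ωb : ∀ m, 2 ≤ m → m < n → ∀ s : ℝ, 0 ≤ s →
          ‖Ω m s‖ ≤ g m * J * (2 * ε)^(m-1) * s^m := by
        intro m hm2 hmn s hs
        exact hΩb m hm2 (fun j' hj'1 hj'2 s' hs' => ih m hmn j' hm2 hj'1 hj'2 s' hs') s hs
      rcases Nat.lt_or_ge j 2 with hjlt | hjge
      · -- j = 1
        obtain rfl : j = 1 := by omega
        rw [hS1 n hn t]
        rcases Nat.lt_or_ge n 3 with hnlt | hnge
        · -- n = 2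
          obtain rfl : n = 2 := by omega
          rw [show (2:ℕ) - 1 = 1 from rfl, hΩ1 t]
          have hint : IntervalIntegrable A MeasureTheory.volume 0 t := by
            apply ContinuousOn.intervalIntegrable
            apply hAcont.mono
            rw [Set.uIcc_of_le ht]
            exact fun x hx => hx.1
          have e1 : (∫ s in (0:ℝ)..t, A s) * A t = ∫ s in (0:ℝ)..t, A s * A t := by
            have := ContinuousLinearMap.intervalIntegral_comp_comm
              ((ContinuousLinearMap.mul ℝ 𝔸).flip (A t)) hint
            simpa using this.symm
          have e2 : A t * (∫ s in (0:ℝ)..t, A s) = ∫ s in (0:ℝ)..t, A t * A s := by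
            have := ContinuousLinearMap.intervalIntegral_comp_comm
              (ContinuousLinearMap.mul ℝ 𝔸 (A t)) hint
            simpa using this.symm
          rw [e1, e2, ← intervalIntegral.integral_sub (hint.mul_const _) (hint.const_mul _)]
          have hb := intervalIntegral.norm_integral_le_of_norm_le_const (a := 0) (b := t)
            (C := 4 * J * ε) (f := fun s => A s * A t - A t * A s)
            (fun s hs => by
              rw [Set.uIoc_of_le ht] at hs
              exact hcommbound s t hs.1.le ht)
          calc ‖∫ s in (0:ℝ)..t, (A s * A t - A t * A s)‖ ≤ 4 * J * ε * |t - 0| := hb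
            _ = f 2 1 * J * (2 * ε * t)^(2-1) := by
              rw [hfn1 2 le_rfl, show (2:ℕ) - 1 = 1 from rfl, g1, abs_of_nonneg (by linarith)]
              ring
        · -- n ≥ 3
          have hΩ := Ωb (n - 1) (by omega) (by omega) t ht
          have hgn : 0 ≤ g (n - 1) := gnonneg (n - 1) (by omega)
          calc ‖Ω (n-1) t * A t - A t * Ω (n-1) t‖
              ≤ 2 * (‖Ω (n-1) t‖ * ‖A t‖) := commnorm _ _
            _ ≤ 2 * ((g (n-1) * J * (2 * ε)^(n-1-1) * t^(n-1)) * ε) := by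
                apply mul_le_mul_of_nonneg_left _ (by norm_num)
                exact mul_le_mul hΩ (hAbound t ht) (norm_nonneg _)
                  (mul_nonneg (mul_nonneg (mul_nonneg hgn hJ) (by positivity)) (by positivity))
            _ = (2 * g (n-1) * J * (2 * ε)^(n-1-1) * t^(n-1-1) * t) * ε := by
                have e2 : t^(n-1) = t^(n-1-1) * t := by
                  rw [← pow_succ]; congr 1; omega
                rw [e2]; ring
            _ ≤ (2 * g (n-1) * J * (2 * ε)^(n-1-1) * t^(n-1-1) * t) * (2 * ε) := by
                apply mul_le_mul_of_nonneg_left (by linarith)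
                exact mul_nonneg (mul_nonneg (mul_nonneg (mul_nonneg
                  (by linarith) hJ) (by positivity)) (by positivity)) ht
            _ = f n 1 * J * (2 * ε * t)^(n-1) := by
                have e1 : (2 * ε * t)^(n-1) = (2 * ε * t)^(n-1-1) * (2 * ε * t) := by
                  rw [← pow_succ]; congr 1; omega
                rw [hfn1 n hn, e1, mul_pow (2 * ε) t (n-1-1)]; ring
      · -- 2 ≤ j
        rw [hSj n j hjge hj2 t]
        have hn3 : 3 ≤ n := by omega
        refine le_trans (norm_sum_le _ _) ?_
        have per : ∀ m ∈ Finset.Icc 1 (n - j),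
            ‖Ω m t * S (n-m) (j-1) t - S (n-m) (j-1) t * Ω m t‖
              ≤ 2 * (g m * f (n-m) (j-1)) * (J * (2 * ε * t)^(n-1)) := by
          intro m hm
          simp only [Finset.mem_Icc] at hm
          have hSb : ‖S (n-m) (j-1) t‖ ≤ f (n-m) (j-1) * J * (2 * ε * t)^(n-m-1) :=
            ih (n-m) (by omega) (j-1) (by omega) (by omega) (by omega) t ht
          have hfnn : 0 ≤ f (n-m) (j-1) := fnonneg (n-m) (j-1) (by omega) (by omega)
          rcases Nat.lt_or_ge m 2 with hmlt | hmge
          · obtain rfl : m = 1 := by omega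
            calc ‖Ω 1 t * S (n-1) (j-1) t - S (n-1) (j-1) t * Ω 1 t‖
                ≤ 2 * (‖Ω 1 t‖ * ‖S (n-1) (j-1) t‖) := commnorm _ _
              _ ≤ 2 * ((ε * t) * (f (n-1) (j-1) * J * (2 * ε * t)^(n-1-1))) := by
                  apply mul_le_mul_of_nonneg_left _ (by norm_num)
                  exact mul_le_mul (hΩ1b t ht) hSb (norm_nonneg _) (by positivity)
              _ = f (n-1) (j-1) * J * (2 * ε * t)^(n-1) := by
                  have e : (2 * ε * t)^(n-1) = (2 * ε * t) * (2 * ε * t)^(n-1-1) := by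
                    rw [← pow_succ']; congr 1; omega
                  rw [e]; ring
              _ ≤ 2 * (g 1 * f (n-1) (j-1)) * (J * (2 * ε * t)^(n-1)) := by
                  rw [g1, one_mul]
                  have h0 : 0 ≤ f (n-1) (j-1) * (J * (2 * ε * t)^(n-1)) :=
                    mul_nonneg hfnn (by positivity)
                  nlinarith [h0]
          · have hΩm := Ωb m hmge (by omega) t ht
            have hgm : 0 ≤ g m := gnonneg m (by omega)
            calc ‖Ω m t * S (n-m) (j-1) t - S (n-m) (j-1) t * Ω m t‖
                ≤ 2 * (‖Ω m t‖ * ‖S (n-m) (j-1) t‖) := commnorm _ _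
              _ ≤ 2 * ((g m * J * (2 * ε)^(m-1) * t^m) * (f (n-m) (j-1) * J * (2 * ε * t)^(n-m-1))) := by
                  apply mul_le_mul_of_nonneg_left _ (by norm_num)
                  exact mul_le_mul hΩm hSb (norm_nonneg _)
                    (mul_nonneg (mul_nonneg (mul_nonneg hgm hJ) (by positivity)) (by positivity))
              _ ≤ 2 * (g m * f (n-m) (j-1)) * (J * (2 * ε * t)^(n-1)) := by
                  have e1 : (2 * ε * t)^(n-1) = (2 * ε)^(n-1) * t^(n-1) := mul_pow _ _ _
                  have e2 : (2 * ε * t)^(n-m-1) = (2 * ε)^(n-m-1) * t^(n-m-1) := mul_pow _ _ _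
                  have e3 : (2 * ε)^(n-1) = (2 * ε) * ((2 * ε)^(m-1) * (2 * ε)^(n-m-1)) := by
                    rw [← pow_add, ← pow_succ']; congr 1; omega
                  have e4 : t^(n-1) = t^m * t^(n-m-1) := by
                    rw [← pow_add]; congr 1; omega
                  rw [e1, e2, e3, e4]
                  have hP : (0:ℝ) ≤ (2 * ε)^(m-1) * (2 * ε)^(n-m-1) := by positivity
                  have hQ : (0:ℝ) ≤ t^m * t^(n-m-1) := by positivity
                  have hcoef : (0:ℝ) ≤ 2 * g m * f (n-m) (j-1) *
                      ((2 * ε)^(m-1) * (2 * ε)^(n-m-1)) * (t^m * t^(n-m-1)) := by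
                    apply mul_nonneg (mul_nonneg (mul_nonneg (mul_nonneg (by norm_num) hgm) hfnn) hP) hQ
                  have hJJ : J * J ≤ J * (2 * ε) := by nlinarith
                  calc 2 * ((g m * J * (2 * ε)^(m-1) * t^m) * (f (n-m) (j-1) * J * ((2 * ε)^(n-m-1) * t^(n-m-1))))
                      = (2 * g m * f (n-m) (j-1) * ((2 * ε)^(m-1) * (2 * ε)^(n-m-1)) * (t^m * t^(n-m-1))) * (J * J) := by ring
                    _ ≤ (2 * g m * f (n-m) (j-1) * ((2 * ε)^(m-1) * (2 * ε)^(n-m-1)) * (t^m * t^(n-m-1))) * (J * (2 * ε)) := by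
                        exact mul_le_mul_of_nonneg_left hJJ hcoef
                    _ = 2 * (g m * f (n-m) (j-1)) * (J * ((2 * ε) * ((2 * ε)^(m-1) * (2 * ε)^(n-m-1)) * (t^m * t^(n-m-1)))) := by ring
        refine le_trans (Finset.sum_le_sum per) ?_
        apply le_of_eq
        rw [hfnj' n j hn hj1 hj2, Finset.mul_sum, Finset.sum_mul, Finset.sum_mul]
        apply Finset.sum_congr rfl
        intro m hm
        ring
  exact fun n j hn hj1 hj2 t ht => main n j hn hj1 hj2 t ht
end

section
/- For every real s with 0 < |s| < 2π, the function g(s) := 2 + (s/2)(1 − cos(s/2)/sin(s/2)) equals the convergent series ∑_{j=0}^∞ (|B_j|/j!) sʲ, where B_j are the Bernoulli numbers. (Here sin(s/2) ≠ 0 since 0 < |s| < 2π, and the identity uses B₀ = 1, |B₁| = 1/2, B_{2j+1} = 0 for j ≥ 1, together with the alternating signs of the even Bernoulli numbers and the expansion (s/2)·cot(s/2) = ∑_{j≥0} (B_j/j!) (is)ʲ + s/2.) -/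
open Finset Complex

/-- The zeta value `∑ 1/n^(2k)` expressed via Bernoulli numbers, bounded between 1 and 2. -/
lemma zeta_val_bounds {k : ℕ} (hk : k ≠ 0) :
    (1 : ℝ) ≤ (-1 : ℝ) ^ (k + 1) * (2 : ℝ) ^ (2 * k - 1) * Real.pi ^ (2 * k) *
        (bernoulli (2 * k) : ℝ) / (2 * k).factorial ∧
      (-1 : ℝ) ^ (k + 1) * (2 : ℝ) ^ (2 * k - 1) * Real.pi ^ (2 * k) *
        (bernoulli (2 * k) : ℝ) / (2 * k).factorial ≤ 2 := by
  have h := hasSum_zeta_nat hk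
  constructor
  · have := le_hasSum h 1 (fun i _ => by positivity)
    simpa using this
  · have h2 : ((-1 : ℝ) ^ (k + 1) * (2 : ℝ) ^ (2 * k - 1) * Real.pi ^ (2 * k) *
        (bernoulli (2 * k) : ℝ) / (2 * k).factorial) ≤ Real.pi ^ 2 / 6 := by
      refine hasSum_le (fun n => ?_) h hasSum_zeta_two
      rcases Nat.eq_zero_or_pos n with hn | hn
      · simp [hn, Nat.mul_ne_zero two_ne_zero hk, pow_eq_zero_iff]
      · have h1n : (1 : ℝ) ≤ (n : ℝ) := by exact_mod_cast hn
        have : (n : ℝ) ^ 2 ≤ (n : ℝ) ^ (2 * k) := by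
          apply pow_le_pow_right₀ h1n; omega
        apply one_div_le_one_div_of_le (by positivity) this
    refine h2.trans ?_
    nlinarith [Real.pi_lt_d2, Real.pi_gt_three]

lemma bern_abs_eq {k : ℕ} (hk : k ≠ 0) :
    |(bernoulli (2 * k) : ℝ)| = (-1 : ℝ) ^ (k + 1) * (bernoulli (2 * k) : ℝ) := by
  obtain ⟨h1, _⟩ := zeta_val_bounds hk
  have hfac : (0 : ℝ) < ((2 * k).factorial : ℝ) := by exact_mod_cast Nat.factorial_pos _
  have hveq : (-1 : ℝ) ^ (k + 1) * (2 : ℝ) ^ (2 * k - 1) * Real.pi ^ (2 * k) *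
        (bernoulli (2 * k) : ℝ) / (2 * k).factorial
      = ((-1 : ℝ) ^ (k + 1) * (bernoulli (2 * k) : ℝ)) *
        ((2 : ℝ) ^ (2 * k - 1) * Real.pi ^ (2 * k) / (2 * k).factorial) := by ring
  have hc : (0 : ℝ) < (2 : ℝ) ^ (2 * k - 1) * Real.pi ^ (2 * k) / (2 * k).factorial := by
    positivity
  have hw : (0 : ℝ) < (-1 : ℝ) ^ (k + 1) * (bernoulli (2 * k) : ℝ) := by
    by_contra hle
    push_neg at hle
    rw [hveq] at h1
    nlinarith
  have habs : |(-1 : ℝ) ^ (k + 1) * (bernoulli (2 * k) : ℝ)|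
      = (-1 : ℝ) ^ (k + 1) * (bernoulli (2 * k) : ℝ) := abs_of_pos hw
  rw [abs_mul, _root_.abs_pow, abs_neg, abs_one, one_pow, one_mul] at habs
  exact habs

lemma bern_abs_div_le (j : ℕ) :
    |(bernoulli j : ℝ)| / j.factorial ≤ 4 / (2 * Real.pi) ^ j := by
  have hpi := Real.pi_gt_three
  rcases Nat.even_or_odd j with ⟨k, hk⟩ | ⟨k, hk⟩
  · rcases Nat.eq_zero_or_pos k with hk0 | hk0
    · subst hk0; simp at hk; subst hk; norm_num
    · have hkne : k ≠ 0 := hk0.ne'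
      have h2k : j = 2 * k := by omega
      subst h2k
      obtain ⟨_, h2⟩ := zeta_val_bounds hkne
      rw [bern_abs_eq hkne]
      have hfac : (0 : ℝ) < ((2 * k).factorial : ℝ) := by
        exact_mod_cast Nat.factorial_pos _
      rw [div_le_div_iff₀ hfac (by positivity)]
      have h2k1 : (2 * Real.pi) ^ (2 * k) = 2 * ((2:ℝ) ^ (2 * k - 1) * Real.pi ^ (2 * k)) := by
        rw [mul_pow]
        have : (2:ℝ) ^ (2 * k) = 2 * 2 ^ (2 * k - 1) := by
          rw [← pow_succ']
          congr 1
          omega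
        rw [this]; ring
      rw [h2k1]
      have h2' := (div_le_iff₀ hfac).mp h2
      nlinarith [pow_pos (by positivity : (0:ℝ) < Real.pi) (2*k),
        pow_pos (by norm_num : (0:ℝ) < 2) (2*k-1)]
  · rcases Nat.eq_zero_or_pos k with hk0 | hk0
    · subst hk0; simp at hk; subst hk
      have h1 : |(bernoulli 1 : ℝ)| = 1/2 := by
        rw [bernoulli_one]; norm_num
      rw [h1]
      simp only [Nat.factorial_one, Nat.cast_one, div_one, pow_one]
      rw [div_le_div_iff₀ (by norm_num) (by positivity)]
      nlinarith [Real.pi_le_four]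
    · have hodd : Odd j := ⟨k, hk⟩
      have h1j : 1 < j := by omega
      have hb : bernoulli j = 0 := by
        rw [bernoulli_eq_bernoulli'_of_ne_one (by omega)]
        exact bernoulli'_eq_zero_of_odd hodd h1j
      rw [hb]
      simp
      positivity

/-- The diagonal Cauchy-product sums for `bernoulliPowerSeries * (exp - 1)`. -/
lemma diag_sum (z : ℂ) (n : ℕ) :
    ∑ kl ∈ antidiagonal n, ((bernoulli kl.1 : ℂ) / kl.1.factorial * z ^ kl.1) *
      (z ^ (kl.2 + 1) / (kl.2 + 1).factorial) = if n = 0 then z else 0 := by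
  rw [Finset.Nat.sum_antidiagonal_eq_sum_range_succ_mk]
  have key : ∀ p ∈ range (n + 1),
      ((bernoulli p : ℂ) / p.factorial * z ^ p) * (z ^ (n - p + 1) / (n - p + 1).factorial)
        = ((((n + 1).choose p : ℚ) * bernoulli p : ℚ) : ℂ) * (z ^ (n + 1) / (n + 1).factorial) := by
    intro p hp
    rw [mem_range, Nat.lt_succ_iff] at hp
    have hz : z ^ p * z ^ (n - p + 1) = z ^ (n + 1) := by
      rw [← pow_add]
      congr 1
      omega
    have hch : (((n + 1).choose p : ℂ)) =
        ((n + 1).factorial : ℂ) / ((p.factorial : ℂ) * ((n - p + 1).factorial : ℂ)) := by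
      rw [Nat.cast_choose ℂ (by omega : p ≤ n + 1), show n + 1 - p = n - p + 1 by omega]
    have hp0 : (p.factorial : ℂ) ≠ 0 := by exact_mod_cast p.factorial_ne_zero
    have hq0 : ((n - p + 1).factorial : ℂ) ≠ 0 := by exact_mod_cast (n - p + 1).factorial_ne_zero
    have hn0 : ((n + 1).factorial : ℂ) ≠ 0 := by exact_mod_cast (n + 1).factorial_ne_zero
    push_cast
    rw [hch]
    field_simp
    rw [← hz]
    ring
  rw [Finset.sum_congr rfl key, ← Finset.sum_mul, ← Rat.cast_sum, sum_bernoulli]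
  rcases eq_or_ne n 0 with h | h
  · subst h
    norm_num [Nat.factorial]
  · rw [if_neg (by omega : ¬ n + 1 = 1), if_neg h]
    norm_num

lemma summable_bern (z : ℂ) (hz : ‖z‖ < 2 * Real.pi) :
    Summable fun j : ℕ => ‖(bernoulli j : ℂ) / j.factorial * z ^ j‖ := by
  have hr : ‖z‖ / (2 * Real.pi) < 1 := by
    rw [div_lt_one (by positivity)]
    exact hz
  have hr0 : 0 ≤ ‖z‖ / (2 * Real.pi) := by positivity
  refine Summable.of_nonneg_of_le
    (fun j => norm_nonneg _) (fun j => ?_) ((summable_geometric_of_lt_one hr0 hr).mul_left 4)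
  · have hnorm : ‖(bernoulli j : ℂ) / j.factorial * z ^ j‖
        = |(bernoulli j : ℝ)| / j.factorial * ‖z‖ ^ j := by
      rw [norm_mul, norm_div, norm_pow]
      norm_num
    have heq : 4 * (‖z‖ / (2 * Real.pi)) ^ j = 4 / (2 * Real.pi) ^ j * ‖z‖ ^ j := by
      rw [div_pow]; ring
    rw [hnorm, heq]
    exact mul_le_mul_of_nonneg_right (bern_abs_div_le j) (by positivity)

lemma hasSum_bern_complex (z : ℂ) (hz : ‖z‖ < 2 * Real.pi) (hz1 : Complex.exp z ≠ 1) :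
    HasSum (fun j : ℕ => (bernoulli j : ℂ) / j.factorial * z ^ j)
      (z / (Complex.exp z - 1)) := by
  have hA := summable_bern z hz
  have hB : Summable fun j : ℕ => ‖z ^ (j + 1) / (j + 1).factorial‖ := by
    have := NormedSpace.norm_expSeries_div_summable z
    exact this.comp_injective Nat.succ_injective
  have hExp : HasSum (fun n : ℕ => z ^ n / n.factorial) (Complex.exp z) := by
    rw [Complex.exp_eq_exp_ℂ]
    exact NormedSpace.expSeries_div_hasSum_exp z
  have hB' : HasSum (fun j : ℕ => z ^ (j + 1) / (j + 1).factorial) (Complex.exp z - 1) := by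
    have h := (hasSum_nat_add_iff' (f := fun n : ℕ => z ^ n / n.factorial) 1).mpr hExp
    simpa [Nat.factorial] using h
  have hprod := tsum_mul_tsum_eq_tsum_sum_antidiagonal_of_summable_norm hA hB
  rw [hB'.tsum_eq] at hprod
  have hdiag : ∑' n : ℕ, ∑ kl ∈ antidiagonal n,
      ((bernoulli kl.1 : ℂ) / kl.1.factorial * z ^ kl.1) *
        (z ^ (kl.2 + 1) / (kl.2 + 1).factorial) = z := by
    rw [tsum_congr (diag_sum z)]
    exact tsum_ite_eq 0 (fun _ => z)
  rw [hdiag] at hprod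
  have hSa : Summable fun j : ℕ => (bernoulli j : ℂ) / j.factorial * z ^ j := hA.of_norm
  have hE0 : Complex.exp z - 1 ≠ 0 := sub_ne_zero.mpr hz1
  have htsum : (∑' j : ℕ, (bernoulli j : ℂ) / j.factorial * z ^ j) = z / (Complex.exp z - 1) := by
    rw [eq_div_iff hE0]
    exact hprod
  rw [← htsum]
  exact hSa.hasSum

lemma value_eq (s : ℝ) (hsin : Real.sin (s / 2) ≠ 0) (hE : Complex.exp (I * s) ≠ 1) :
    (I * s) / (Complex.exp (I * s) - 1) =
      (((s / 2) * (Real.cos (s / 2) / Real.sin (s / 2)) : ℝ) : ℂ) - I * s / 2 := by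
  have hsin' : Complex.sin ((s : ℂ) / 2) ≠ 0 := by
    rw [show ((s:ℂ)/2) = ((s/2 : ℝ) : ℂ) by push_cast; ring, ← Complex.ofReal_sin]
    exact_mod_cast hsin
  have hE0 : Complex.exp (I * s) - 1 ≠ 0 := sub_ne_zero.mpr hE
  have hI2 : (I:ℂ)^2 = -1 := I_sq
  have hpy : Complex.sin ((s:ℂ)/2)^2 + Complex.cos ((s:ℂ)/2)^2 = 1 := Complex.sin_sq_add_cos_sq _
  have hwsq : Complex.exp (I * s) = Complex.exp ((s:ℂ)/2 * I) * Complex.exp ((s:ℂ)/2 * I) := by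
    rw [← Complex.exp_add]; ring_nf
  push_cast [Complex.ofReal_cos, Complex.ofReal_sin]
  rw [div_eq_iff hE0, hwsq, Complex.exp_mul_I]
  field_simp
  linear_combination (-(I*(s:ℂ)*Complex.sin ((s:ℂ)/2)) - (s:ℂ)*Complex.cos ((s:ℂ)/2)) * hpy +
    ((s:ℂ)*Complex.sin ((s:ℂ)/2)^2*Complex.cos ((s:ℂ)/2) + (s:ℂ)*Complex.sin ((s:ℂ)/2)^3*I) * hI2

lemma re_term (s : ℝ) (j : ℕ) :
    ((bernoulli j : ℂ) / j.factorial * (I * s) ^ j).re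
      = (bernoulli j : ℝ) / j.factorial * ((I ^ j).re * s ^ j) := by
  have h : (bernoulli j : ℂ) / j.factorial * (I * s) ^ j
      = (((bernoulli j : ℝ) / j.factorial : ℝ) : ℂ) * (I ^ j * ((s ^ j : ℝ) : ℂ)) := by
    push_cast; ring
  rw [h, Complex.re_ofReal_mul]
  congr 1
  simp [Complex.mul_re, ← Complex.ofReal_pow]

lemma hterm (s : ℝ) (j : ℕ) : |(bernoulli j : ℝ)| / j.factorial * s ^ j
    = ((if j = 0 then (2:ℝ) else 0) + (if j = 1 then s/2 else 0))
      - ((bernoulli j : ℂ) / j.factorial * (I * s) ^ j).re := by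
  rw [re_term]
  match j with
  | 0 => norm_num
  | 1 =>
    norm_num [bernoulli_one]
    ring
  | (n+2) =>
    simp only [if_neg (by omega : ¬ n + 2 = 0), if_neg (by omega : ¬ n + 2 = 1), add_zero,
      zero_add, zero_sub]
    rcases Nat.even_or_odd (n+2) with ⟨k, hk⟩ | ⟨k, hk⟩
    · have hkne : k ≠ 0 := by omega
      have h2k : n + 2 = 2 * k := by omega
      rw [h2k]
      have hire : ((I : ℂ) ^ (2 * k)).re = (-1 : ℝ) ^ k := by
        rw [pow_mul, I_sq, show ((-1:ℂ)) = ((-1:ℝ):ℂ) by norm_num, ← Complex.ofReal_pow,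
          Complex.ofReal_re]
      rw [hire, bern_abs_eq hkne, pow_succ]
      ring
    · have hodd : Odd (n+2) := ⟨k, hk⟩
      have hb : bernoulli (n+2) = 0 := by
        rw [bernoulli_eq_bernoulli'_of_ne_one (by omega)]
        exact bernoulli'_eq_zero_of_odd hodd (by omega)
      have h2k : n + 2 = 2 * k + 1 := by omega
      have hire : ((I : ℂ) ^ (n + 2)).re = 0 := by
        rw [h2k, pow_succ, pow_mul, I_sq]
        rcases Nat.even_or_odd k with he | ho
        · rw [he.neg_one_pow]; simp
        · rw [ho.neg_one_pow]; simp
      rw [hire, hb]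
      simp

/-- For `0 < |s| < 2π` the function
`g(s) = 2 + (s/2)(1 - cos(s/2)/sin(s/2))` equals the convergent power series
`∑_{j≥0} (|B_j|/j!) sʲ`, where `B_j` are the Bernoulli numbers
(convention `x/(eˣ-1) = ∑ (B_j/j!) xʲ`, so `B₁ = -1/2`). -/
theorem abs_bernoulli_series_eq_g (s : ℝ) (hs : 0 < |s|) (hs2 : |s| < 2 * Real.pi) :
    HasSum (fun j : ℕ => (|(bernoulli j : ℝ)| / j.factorial) * s^j)
      (2 + (s/2) * (1 - Real.cos (s/2) / Real.sin (s/2))) := by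
  have hs0 : s ≠ 0 := by simpa [abs_pos] using hs
  have hpi := Real.pi_gt_three
  have hnot : ∀ n : ℤ, s ≠ 2 * Real.pi * n := by
    intro n hn
    rcases eq_or_ne n 0 with h0 | h0
    · simp [h0] at hn; exact hs0 hn
    · have h1 : (1 : ℝ) ≤ |(n : ℝ)| := by
        exact_mod_cast Int.one_le_abs h0
      rw [hn, abs_mul, abs_of_pos (by positivity : (0:ℝ) < 2 * Real.pi)] at hs2
      nlinarith
  have hE : Complex.exp (I * s) ≠ 1 := by
    intro h
    rw [Complex.exp_eq_one_iff] at h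
    obtain ⟨n, hn⟩ := h
    have hI2 : (I : ℂ)^2 = -1 := I_sq
    have h2 : (s : ℂ) = ((2 * Real.pi * n : ℝ) : ℂ) := by
      push_cast
      linear_combination (-I) * hn + ((s:ℂ) - 2*Real.pi*n) * hI2
    exact hnot n (by exact_mod_cast h2)
  have hsin : Real.sin (s / 2) ≠ 0 := by
    rw [Real.sin_ne_zero_iff]
    intro n hn
    apply hnot n
    linarith
  have hz : ‖I * (s : ℂ)‖ < 2 * Real.pi := by
    simpa using hs2
  have hA := hasSum_bern_complex (I * s) hz hE
  rw [value_eq s hsin hE] at hA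
  have hRe := Complex.hasSum_re hA
  have hval : ((((s / 2) * (Real.cos (s / 2) / Real.sin (s / 2)) : ℝ) : ℂ) - I * s / 2).re
      = (s / 2) * (Real.cos (s / 2) / Real.sin (s / 2)) := by
    have h0 : ((I * (s:ℂ)) / 2).re = 0 := by simp
    rw [Complex.sub_re, Complex.ofReal_re, h0, sub_zero]
  rw [hval] at hRe
  have hEsum : HasSum (fun j : ℕ => (if j = 0 then (2:ℝ) else 0) + (if j = 1 then s/2 else 0))
      (2 + s/2) := (hasSum_ite_eq 0 2).add (hasSum_ite_eq 1 (s/2))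
  have hfin := hEsum.sub hRe
  have hmain : HasSum (fun j : ℕ => |(bernoulli j : ℝ)| / j.factorial * s ^ j)
      (2 + s/2 - (s / 2) * (Real.cos (s / 2) / Real.sin (s / 2))) :=
    HasSum.congr_fun hfin (hterm s)
  convert hmain using 1
  ring
end

section
/- Let m, k ≥ 1, let ι be a finite index set, and let O ∈ Matrix (Fin m × Fin k) (Fin m × Fin k) ℂ admit a decomposition O = (1_m ⊗ B₀) + ∑_{α ∈ ι} (S_α ⊗ B_α) (Kronecker products, system factor first), where B₀ and each B_α are Hermitian k×k matrices, and each S_α is a Hermitian m×m matrix with trace(S_α) = 0. Then (a) ‖B₀‖ ≤ ‖O‖, and (b) ‖∑_{α} S_α ⊗ B_α‖ ≤ 2‖O‖, where ‖·‖ denotes the operator norm. -/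
open scoped Matrix.Norms.L2Operator Kronecker

namespace PBH
open Matrix

/-- The isometry embedding the bath space into the `i`-th system block. -/
def V (m k : ℕ) (i : Fin m) : Matrix (Fin m × Fin k) (Fin k) ℂ :=
  Matrix.of fun p l => if p = (i, l) then 1 else 0

lemma V_conjTranspose_mul_self {m k : ℕ} (i : Fin m) :
    (PBH.V m k i)ᴴ * (PBH.V m k i) = 1 := by
  ext l l'
  simp [Matrix.mul_apply, V, Matrix.one_apply, Matrix.conjTranspose_apply,
    Fintype.sum_prod_type, Prod.ext_iff, ite_and, apply_ite (starRingEnd ℂ),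
    Finset.sum_ite_eq', eq_comm]

lemma V_compress {m k : ℕ} (i : Fin m) (M : Matrix (Fin m × Fin k) (Fin m × Fin k) ℂ) :
    (PBH.V m k i)ᴴ * M * (PBH.V m k i) = Matrix.of fun l l' => M (i, l) (i, l') := by
  ext l l'
  simp [Matrix.mul_apply, V, Matrix.conjTranspose_apply, Fintype.sum_prod_type, Prod.ext_iff,
    ite_and, apply_ite (starRingEnd ℂ), Finset.sum_ite_eq', mul_ite, ite_mul]

lemma V_compress_kronecker {m k : ℕ} (i : Fin m) (A : Matrix (Fin m) (Fin m) ℂ)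
    (C : Matrix (Fin k) (Fin k) ℂ) :
    (PBH.V m k i)ᴴ * (A ⊗ₖ C) * (PBH.V m k i) = A i i • C := by
  rw [V_compress]
  ext l l'
  simp [Matrix.kroneckerMap_apply]

lemma norm_V {m k : ℕ} (hk : 1 ≤ k) (i : Fin m) : ‖V m k i‖ = 1 := by
  haveI : Nonempty (Fin k) := ⟨⟨0, hk⟩⟩
  have h1 : ‖(1 : Matrix (Fin k) (Fin k) ℂ)‖ = 1 := norm_one
  have := Matrix.l2_opNorm_conjTranspose_mul_self (PBH.V m k i)
  rw [V_conjTranspose_mul_self, h1] at this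
  nlinarith [norm_nonneg (PBH.V m k i)]

lemma norm_compress_le {m k : ℕ} (hk : 1 ≤ k) (i : Fin m)
    (M : Matrix (Fin m × Fin k) (Fin m × Fin k) ℂ) :
    ‖(PBH.V m k i)ᴴ * M * (PBH.V m k i)‖ ≤ ‖M‖ := by
  calc ‖(PBH.V m k i)ᴴ * M * (PBH.V m k i)‖ ≤ ‖(PBH.V m k i)ᴴ * M‖ * ‖V m k i‖ :=
        Matrix.l2_opNorm_mul _ _
    _ ≤ ‖(PBH.V m k i)ᴴ‖ * ‖M‖ * ‖V m k i‖ := by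
        gcongr; exact Matrix.l2_opNorm_mul _ _
    _ = ‖M‖ := by rw [Matrix.l2_opNorm_conjTranspose, norm_V hk]; ring

noncomputable instance mcstar (n : Type*) [Fintype n] [DecidableEq n] :
    CStarAlgebra (Matrix n n ℂ) where

/-- `C ↦ 1 ⊗ₖ C` as a star algebra homomorphism. -/
noncomputable def incl (m k : ℕ) :
    Matrix (Fin k) (Fin k) ℂ →⋆ₐ[ℂ] Matrix (Fin m × Fin k) (Fin m × Fin k) ℂ where
  toFun C := (1 : Matrix (Fin m) (Fin m) ℂ) ⊗ₖ C
  map_one' := Matrix.one_kronecker_one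
  map_mul' C D := by rw [← Matrix.mul_kronecker_mul, one_mul]
  map_zero' := by ext p q; simp
  map_add' C D := Matrix.kronecker_add _ C D
  commutes' r := by
    simp [Algebra.algebraMap_eq_smul_one, Matrix.kronecker_smul, Matrix.one_kronecker_one]
  map_star' C := by
    ext p q
    simp [Matrix.kroneckerMap_apply, Matrix.conjTranspose_apply, Matrix.one_apply, star,
      apply_ite (starRingEnd ℂ), eq_comm]
    split <;> simp [Complex.ext_iff]

lemma norm_one_kronecker_le {m k : ℕ} (C : Matrix (Fin k) (Fin k) ℂ) :
    ‖(1 : Matrix (Fin m) (Fin m) ℂ) ⊗ₖ C‖ ≤ ‖C‖ :=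
  NonUnitalStarAlgHom.norm_apply_le (incl m k) C

end PBH

open Matrix in
/-- If `O = 1 ⊗ B₀ + ∑_α S_α ⊗ B_α` where `B₀` and the `B_α` are Hermitian and
the `S_α` are Hermitian and traceless, then `‖B₀‖ ≤ ‖O‖` and `‖∑_α S_α ⊗ B_α‖ ≤ 2‖O‖` in
the operator norm. -/
theorem pure_bath_and_traceless_part_norm_bound
    {m k : ℕ} (hm : 1 ≤ m) (hk : 1 ≤ k) {ι : Type*} [Fintype ι]
    (B₀ : Matrix (Fin k) (Fin k) ℂ) (hB₀ : B₀.IsHermitian)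
    (S : ι → Matrix (Fin m) (Fin m) ℂ) (B : ι → Matrix (Fin k) (Fin k) ℂ)
    (hS : ∀ α, (S α).IsHermitian) (hStr : ∀ α, (S α).trace = 0)
    (hB : ∀ α, (B α).IsHermitian)
    (O : Matrix (Fin m × Fin k) (Fin m × Fin k) ℂ)
    (hO : O = (1 : Matrix (Fin m) (Fin m) ℂ) ⊗ₖ B₀ + ∑ α, S α ⊗ₖ B α) :
    ‖B₀‖ ≤ ‖O‖ ∧ ‖∑ α, S α ⊗ₖ B α‖ ≤ 2 * ‖O‖ := by
  have h1 : ∀ i : Fin m, (PBH.V m k i)ᴴ * O * (PBH.V m k i) = B₀ + ∑ α, (S α i i) • B α := by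
    intro i
    rw [hO, Matrix.mul_add, Matrix.add_mul, PBH.V_compress_kronecker, Matrix.one_apply_eq,
      one_smul, Matrix.mul_sum, Matrix.sum_mul]
    congr 1
    exact Finset.sum_congr rfl fun α _ => PBH.V_compress_kronecker i (S α) (B α)
  have key : ∑ i : Fin m, (PBH.V m k i)ᴴ * O * (PBH.V m k i) = (m : ℂ) • B₀ := by
    simp only [h1, Finset.sum_add_distrib, Finset.sum_const, Finset.card_univ,
      Fintype.card_fin]
    rw [Finset.sum_comm]
    have hz : ∀ α : ι, ∑ i : Fin m, (S α i i) • B α = 0 := by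
      intro α
      rw [← Finset.sum_smul]
      have := hStr α
      simp only [Matrix.trace, Matrix.diag] at this
      rw [this, zero_smul]
    simp [hz, Nat.cast_smul_eq_nsmul]
  have hmpos : (0 : ℝ) < (m : ℝ) := by exact_mod_cast hm
  have hkey : (m : ℝ) * ‖B₀‖ ≤ (m : ℝ) * ‖O‖ := by
    calc (m : ℝ) * ‖B₀‖ = ‖(m : ℂ) • B₀‖ := by
          rw [norm_smul]; simp
      _ = ‖∑ i : Fin m, (PBH.V m k i)ᴴ * O * (PBH.V m k i)‖ := by rw [key]
      _ ≤ ∑ i : Fin m, ‖(PBH.V m k i)ᴴ * O * (PBH.V m k i)‖ := norm_sum_le _ _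
      _ ≤ ∑ _i : Fin m, ‖O‖ :=
          Finset.sum_le_sum fun i _ => PBH.norm_compress_le hk i O
      _ = (m : ℝ) * ‖O‖ := by simp [Finset.sum_const, mul_comm]
  have ha : ‖B₀‖ ≤ ‖O‖ := le_of_mul_le_mul_left hkey hmpos
  refine ⟨ha, ?_⟩
  have hsum : ∑ α, S α ⊗ₖ B α = O - (1 : Matrix (Fin m) (Fin m) ℂ) ⊗ₖ B₀ := by
    rw [hO, add_sub_cancel_left]
  calc ‖∑ α, S α ⊗ₖ B α‖ = ‖O - (1 : Matrix (Fin m) (Fin m) ℂ) ⊗ₖ B₀‖ := by rw [hsum]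
    _ ≤ ‖O‖ + ‖(1 : Matrix (Fin m) (Fin m) ℂ) ⊗ₖ B₀‖ := norm_sub_le _ _
    _ ≤ ‖O‖ + ‖B₀‖ := by
        have := PBH.norm_one_kronecker_le (m := m) B₀
        linarith
    _ ≤ ‖O‖ + ‖O‖ := by linarith
    _ = 2 * ‖O‖ := by ring
end

section
/- Let A be a complex Banach algebra and A, B ∈ A. Then ‖e^A − e^B‖ ≥ 2‖A − B‖ − 2 · exp( (1/2)‖A + B‖ ) · sinh( (1/2)‖A − B‖ ). -/
open NormedSpace Nat

lemma key_pow_bound {𝔸 : Type*} [NormedRing 𝔸] (P Q : 𝔸) (n : ℕ) :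
    ‖(P+Q)^(n+1) - (P-Q)^(n+1)‖ ≤ (‖P‖+‖Q‖)^(n+1) - (‖P‖-‖Q‖)^(n+1) ∧
    ‖(P+Q)^(n+1) + (P-Q)^(n+1)‖ ≤ (‖P‖+‖Q‖)^(n+1) + (‖P‖-‖Q‖)^(n+1) := by
  induction n with
  | zero =>
    constructor
    · have h : (P+Q)^1 - (P-Q)^1 = Q + Q := by noncomm_ring
      rw [h]
      simp only [zero_add, pow_one]
      have := norm_add_le Q Q
      linarith
    · have h : (P+Q)^1 + (P-Q)^1 = P + P := by noncomm_ring
      rw [h]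
      simp only [zero_add, pow_one]
      have := norm_add_le P P
      linarith
  | succ n ih =>
    obtain ⟨hD, hS⟩ := ih
    have hp : (0:ℝ) ≤ ‖P‖ := norm_nonneg _
    have hq : (0:ℝ) ≤ ‖Q‖ := norm_nonneg _
    have eD : (P+Q)^(n+2) - (P-Q)^(n+2)
        = ((P+Q)^(n+1) - (P-Q)^(n+1)) * P + ((P+Q)^(n+1) + (P-Q)^(n+1)) * Q := by
      rw [pow_succ, pow_succ]; noncomm_ring
    have eS : (P+Q)^(n+2) + (P-Q)^(n+2)
        = ((P+Q)^(n+1) + (P-Q)^(n+1)) * P + ((P+Q)^(n+1) - (P-Q)^(n+1)) * Q := by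
      rw [pow_succ, pow_succ]; noncomm_ring
    have bD := norm_mul_le ((P+Q)^(n+1) - (P-Q)^(n+1)) P
    have bS := norm_mul_le ((P+Q)^(n+1) + (P-Q)^(n+1)) Q
    have bD' := norm_mul_le ((P+Q)^(n+1) + (P-Q)^(n+1)) P
    have bS' := norm_mul_le ((P+Q)^(n+1) - (P-Q)^(n+1)) Q
    constructor
    · calc ‖(P+Q)^(n+2) - (P-Q)^(n+2)‖
          ≤ ‖((P+Q)^(n+1) - (P-Q)^(n+1)) * P‖ + ‖((P+Q)^(n+1) + (P-Q)^(n+1)) * Q‖ := by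
            rw [eD]; exact norm_add_le _ _
        _ ≤ (‖P‖+‖Q‖)^(n+2) - (‖P‖-‖Q‖)^(n+2) := by
            have h1 : ‖(P+Q)^(n+1) - (P-Q)^(n+1)‖ * ‖P‖
                ≤ ((‖P‖+‖Q‖)^(n+1) - (‖P‖-‖Q‖)^(n+1)) * ‖P‖ :=
              mul_le_mul_of_nonneg_right hD hp
            have h2 : ‖(P+Q)^(n+1) + (P-Q)^(n+1)‖ * ‖Q‖
                ≤ ((‖P‖+‖Q‖)^(n+1) + (‖P‖-‖Q‖)^(n+1)) * ‖Q‖ :=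
              mul_le_mul_of_nonneg_right hS hq
            have e1 : (‖P‖+‖Q‖)^(n+2) = (‖P‖+‖Q‖)^(n+1) * (‖P‖+‖Q‖) := by ring
            have e2 : (‖P‖-‖Q‖)^(n+2) = (‖P‖-‖Q‖)^(n+1) * (‖P‖-‖Q‖) := by ring
            nlinarith [bD, bS]
    · calc ‖(P+Q)^(n+2) + (P-Q)^(n+2)‖
          ≤ ‖((P+Q)^(n+1) + (P-Q)^(n+1)) * P‖ + ‖((P+Q)^(n+1) - (P-Q)^(n+1)) * Q‖ := by
            rw [eS]; exact norm_add_le _ _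
        _ ≤ (‖P‖+‖Q‖)^(n+2) + (‖P‖-‖Q‖)^(n+2) := by
            have h1 : ‖(P+Q)^(n+1) + (P-Q)^(n+1)‖ * ‖P‖
                ≤ ((‖P‖+‖Q‖)^(n+1) + (‖P‖-‖Q‖)^(n+1)) * ‖P‖ :=
              mul_le_mul_of_nonneg_right hS hp
            have h2 : ‖(P+Q)^(n+1) - (P-Q)^(n+1)‖ * ‖Q‖
                ≤ ((‖P‖+‖Q‖)^(n+1) - (‖P‖-‖Q‖)^(n+1)) * ‖Q‖ :=
              mul_le_mul_of_nonneg_right hD hq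
            have e1 : (‖P‖+‖Q‖)^(n+2) = (‖P‖+‖Q‖)^(n+1) * (‖P‖+‖Q‖) := by ring
            have e2 : (‖P‖-‖Q‖)^(n+2) = (‖P‖-‖Q‖)^(n+1) * (‖P‖-‖Q‖) := by ring
            nlinarith [bD', bS']

/-- In a complex Banach algebra,
`‖e^A - e^B‖ ≥ 2‖A - B‖ - 2 exp(‖A+B‖/2) sinh(‖A-B‖/2)`. -/
theorem norm_exp_sub_exp_lower_bound
    {𝔸 : Type*} [NormedRing 𝔸] [NormedAlgebra ℂ 𝔸] [CompleteSpace 𝔸] (A B : 𝔸) :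
    2 * ‖A - B‖ - 2 * Real.exp (‖A + B‖ / 2) * Real.sinh (‖A - B‖ / 2)
      ≤ ‖NormedSpace.exp A - NormedSpace.exp B‖ := by
  set P : 𝔸 := (2⁻¹ : ℂ) • (A + B) with hPdef
  set Q : 𝔸 := (2⁻¹ : ℂ) • (A - B) with hQdef
  have hA : A = P + Q := by rw [hPdef, hQdef]; module
  have hB : B = P - Q := by rw [hPdef, hQdef]; module
  have hp : ‖P‖ = ‖A + B‖ / 2 := by
    rw [hPdef, norm_smul]; norm_num; ring
  have hq : ‖Q‖ = ‖A - B‖ / 2 := by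
    rw [hQdef, norm_smul]; norm_num; ring
  set r : ℝ := ‖A + B‖ / 2 + ‖A - B‖ / 2 with hrdef
  set s : ℝ := ‖A + B‖ / 2 - ‖A - B‖ / 2 with hsdef
  -- series for exp difference
  set f : ℕ → 𝔸 := fun n => ((Nat.factorial n : ℕ) : ℂ)⁻¹ • (A ^ n - B ^ n) with hfdef
  have sA : Summable (fun n : ℕ => ((n !) : ℂ)⁻¹ • A ^ n) := NormedSpace.expSeries_summable' A
  have sB : Summable (fun n : ℕ => ((n !) : ℂ)⁻¹ • B ^ n) := NormedSpace.expSeries_summable' B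
  have hf : Summable f := by
    have := sA.sub sB
    simpa [hfdef, smul_sub] using this
  have hexp : NormedSpace.exp A - NormedSpace.exp B = ∑' n, f n := by
    simp only [NormedSpace.exp_eq_tsum ℂ]
    rw [← Summable.tsum_sub sA sB]
    simp [hfdef, smul_sub]
  have hsplit := (Summable.sum_add_tsum_nat_add 2 hf).symm
  have hsum2 : ∑ i ∈ Finset.range 2, f i = A - B := by
    simp [hfdef, Finset.sum_range_succ]
  set R : 𝔸 := ∑' n, f (n + 2) with hRdef
  have hAB : A - B = (NormedSpace.exp A - NormedSpace.exp B) - R := by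
    rw [hexp, hsplit, hsum2]; abel
  -- real comparison series
  have sr : Summable (fun n : ℕ => r ^ n / n !) := Real.summable_pow_div_factorial r
  have ss : Summable (fun n : ℕ => s ^ n / n !) := Real.summable_pow_div_factorial s
  set g : ℕ → ℝ := fun n => r ^ (n + 2) / (n + 2)! - s ^ (n + 2) / (n + 2)! with hgdef
  have sg : Summable g := by
    exact ((summable_nat_add_iff 2).2 sr).sub ((summable_nat_add_iff 2).2 ss)
  have hexpr : ∑' n : ℕ, r ^ n / n ! = Real.exp r := by
    rw [Real.exp_eq_exp_ℝ, NormedSpace.exp_eq_tsum_div]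
  have hexps : ∑' n : ℕ, s ^ n / n ! = Real.exp s := by
    rw [Real.exp_eq_exp_ℝ, NormedSpace.exp_eq_tsum_div]
  have htr := (Summable.sum_add_tsum_nat_add 2 sr).symm
  have hts := (Summable.sum_add_tsum_nat_add 2 ss).symm
  rw [hexpr] at htr
  rw [hexps] at hts
  simp only [Finset.sum_range_succ, Finset.sum_range_zero, pow_zero, pow_one,
    Nat.factorial_zero, Nat.factorial_one, Nat.cast_one, div_one, zero_add] at htr hts
  have htg : ∑' n, g n = Real.exp r - Real.exp s - (r - s) := by
    rw [hgdef, Summable.tsum_sub ((summable_nat_add_iff 2).2 sr) ((summable_nat_add_iff 2).2 ss)]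
    linarith [htr, hts]
  have hterm : ∀ n : ℕ, ‖f (n + 2)‖ ≤ g n := by
    intro n
    have hk : ‖A ^ (n + 2) - B ^ (n + 2)‖ ≤ r ^ (n + 2) - s ^ (n + 2) := by
      rw [hA, hB, hrdef, hsdef, ← hp, ← hq]
      exact (key_pow_bound P Q (n + 1)).1
    have hfn : ‖f (n + 2)‖ = ((n + 2)! : ℝ)⁻¹ * ‖A ^ (n + 2) - B ^ (n + 2)‖ := by
      rw [hfdef]
      simp [norm_smul]
    rw [hfn, hgdef]
    have hpos : (0:ℝ) < ((n + 2)! : ℝ) := by positivity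
    calc ((n + 2)! : ℝ)⁻¹ * ‖A ^ (n + 2) - B ^ (n + 2)‖
        ≤ ((n + 2)! : ℝ)⁻¹ * (r ^ (n + 2) - s ^ (n + 2)) := by
          exact mul_le_mul_of_nonneg_left hk (by positivity)
      _ = r ^ (n + 2) / ((n + 2)! : ℝ) - s ^ (n + 2) / ((n + 2)! : ℝ) := by ring
  have sfn : Summable (fun n : ℕ => ‖f (n + 2)‖) :=
    Summable.of_nonneg_of_le (fun n => norm_nonneg _) hterm sg
  have hnormR : ‖R‖ ≤ Real.exp r - Real.exp s - (r - s) := by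
    calc ‖R‖ ≤ ∑' n, ‖f (n + 2)‖ := norm_tsum_le_tsum_norm sfn
      _ ≤ ∑' n, g n := Summable.tsum_le_tsum hterm sfn sg
      _ = _ := htg
  have h1 : ‖A - B‖ ≤ ‖NormedSpace.exp A - NormedSpace.exp B‖ + ‖R‖ := by
    rw [hAB]; exact norm_sub_le _ _
  have hsinh : 2 * Real.exp (‖A + B‖ / 2) * Real.sinh (‖A - B‖ / 2)
      = Real.exp r - Real.exp s := by
    rw [Real.sinh_eq, hrdef, hsdef, Real.exp_add, Real.exp_sub, Real.exp_neg]
    have := Real.exp_ne_zero (‖A - B‖ / 2)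
    field_simp
  have hrs : r - s = ‖A - B‖ := by rw [hrdef, hsdef]; ring
  linarith [h1, hnormR, hsinh, hrs]
end

section
/- Let A be a complex Banach algebra, let A, B ∈ A, and set N := (A + B)/2 and M := (A − B)/2. Then for every n ≥ 1, ‖Aⁿ − Bⁿ‖ ≤ (‖N‖ + ‖M‖)ⁿ − (‖N‖ − ‖M‖)ⁿ. -/
/-- In a complex Banach algebra, with `N = (A+B)/2` and `M = (A-B)/2`,
`‖Aⁿ - Bⁿ‖ ≤ (‖N‖ + ‖M‖)ⁿ - (‖N‖ - ‖M‖)ⁿ` for every `n ≥ 1`. -/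
theorem norm_pow_sub_pow_le
    {𝔸 : Type*} [NormedRing 𝔸] [NormedAlgebra ℂ 𝔸] (A B : 𝔸) (n : ℕ) (hn : 1 ≤ n) :
    ‖A^n - B^n‖
      ≤ (‖(1/2 : ℂ) • (A + B)‖ + ‖(1/2 : ℂ) • (A - B)‖)^n
        - (‖(1/2 : ℂ) • (A + B)‖ - ‖(1/2 : ℂ) • (A - B)‖)^n := by
  set N := (1/2 : ℂ) • (A + B) with hN
  set M := (1/2 : ℂ) • (A - B) with hM
  have hA : A = N + M := by rw [hN, hM]; module
  have hB : B = N - M := by rw [hN, hM]; module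
  set a := ‖N‖ with ha
  set b := ‖M‖ with hb
  have hab : A - B = (2 : ℂ) • M := by rw [hM]; module
  have hab' : A + B = (2 : ℂ) • N := by rw [hN]; module
  have key : ∀ m, 1 ≤ m → ‖A^m - B^m‖ ≤ (a+b)^m - (a-b)^m ∧
      ‖A^m + B^m‖ ≤ (a+b)^m + (a-b)^m := by
    intro m hm
    induction m, hm using Nat.le_induction with
    | base =>
      constructor
      · simp only [pow_one]
        rw [hab, norm_smul]
        simp [ha, hb]
        ring_nf
        linarith [norm_nonneg M]
      · simp only [pow_one]
        rw [hab', norm_smul]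
        simp [ha, hb]
        ring_nf
        linarith [norm_nonneg N]
    | succ m hm ih =>
      obtain ⟨ihs, ihp⟩ := ih
      set X := A^m with hX
      set Y := B^m with hY
      have h1 : A^(m+1) - B^(m+1) = (X - Y) * N + (X + Y) * M := by
        rw [pow_succ, pow_succ, ← hX, ← hY]
        nth_rewrite 1 [hA]; nth_rewrite 1 [hB]
        noncomm_ring
      have h2 : A^(m+1) + B^(m+1) = (X + Y) * N + (X - Y) * M := by
        rw [pow_succ, pow_succ, ← hX, ← hY]
        nth_rewrite 1 [hA]; nth_rewrite 1 [hB]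
        noncomm_ring
      have hanneg : 0 ≤ a := norm_nonneg N
      have hbnneg : 0 ≤ b := norm_nonneg M
      constructor
      · calc ‖A^(m+1) - B^(m+1)‖ = ‖(X - Y) * N + (X + Y) * M‖ := by rw [h1]
          _ ≤ ‖(X - Y) * N‖ + ‖(X + Y) * M‖ := norm_add_le _ _
          _ ≤ ‖X - Y‖ * a + ‖X + Y‖ * b :=
              add_le_add (norm_mul_le _ _) (norm_mul_le _ _)
          _ ≤ ((a+b)^m - (a-b)^m) * a + ((a+b)^m + (a-b)^m) * b :=
              add_le_add (mul_le_mul_of_nonneg_right ihs hanneg)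
                (mul_le_mul_of_nonneg_right ihp hbnneg)
          _ = (a+b)^(m+1) - (a-b)^(m+1) := by ring
      · calc ‖A^(m+1) + B^(m+1)‖ = ‖(X + Y) * N + (X - Y) * M‖ := by rw [h2]
          _ ≤ ‖(X + Y) * N‖ + ‖(X - Y) * M‖ := norm_add_le _ _
          _ ≤ ‖X + Y‖ * a + ‖X - Y‖ * b :=
              add_le_add (norm_mul_le _ _) (norm_mul_le _ _)
          _ ≤ ((a+b)^m + (a-b)^m) * a + ((a+b)^m - (a-b)^m) * b :=
              add_le_add (mul_le_mul_of_nonneg_right ihp hanneg)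
                (mul_le_mul_of_nonneg_right ihs hbnneg)
          _ = (a+b)^(m+1) + (a-b)^(m+1) := by ring
  exact (key n hn).1
end

section
/- Let A be a complex Banach algebra and A, B ∈ A, and suppose ‖A + B‖ ≤ ε₊ and ‖A − B‖ ≤ ε₋ with ε₋ > 0. If 2 − exp(ε₊/2) · sinh(ε₋/2)/(ε₋/2) > 0, then ‖A − B‖ ≤ c(ε₊, ε₋) · ‖e^A − e^B‖, where c(ε₊, ε₋) := ( 2 − exp(ε₊/2) · sinh(ε₋/2)/(ε₋/2) )^{−1}. -/
lemma my_sinh_convexOn : ConvexOn ℝ (Set.Ici (0:ℝ)) Real.sinh := by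
  apply convexOn_of_deriv2_nonneg (convex_Ici 0) Real.continuous_sinh.continuousOn
    Real.differentiable_sinh.differentiableOn
  · rw [Real.deriv_sinh]; exact Real.differentiable_cosh.differentiableOn
  · intro x hx
    rw [interior_Ici, Set.mem_Ioi] at hx
    simp only [Function.iterate_succ, Function.iterate_zero, Function.comp_apply, id_eq,
      Real.deriv_sinh, Real.deriv_cosh]
    exact Real.sinh_nonneg_iff.2 hx.le

lemma my_sinh_mul_le {a b : ℝ} (ha : 0 ≤ a) (hab : a ≤ b) :
    Real.sinh a * b ≤ Real.sinh b * a := by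
  rcases eq_or_lt_of_le (ha.trans hab) with hb | hb
  · have : a = 0 := le_antisymm (hab.trans hb.symm.le) ha
    simp [this, ← hb]
  · have ht0 : 0 ≤ a / b := div_nonneg ha hb.le
    have ht1 : a / b ≤ 1 := (div_le_one hb).2 hab
    have h := my_sinh_convexOn.2 (Set.mem_Ici.2 hb.le) (Set.mem_Ici.2 (le_refl (0:ℝ)))
      ht0 (by linarith : (0:ℝ) ≤ 1 - a / b) (by ring)
    simp only [smul_eq_mul, mul_zero, add_zero, Real.sinh_zero] at h
    rw [div_mul_cancel₀ _ hb.ne'] at h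
    calc Real.sinh a * b ≤ (a / b * Real.sinh b) * b :=
          mul_le_mul_of_nonneg_right h hb.le
      _ = Real.sinh b * a := by field_simp

lemma my_pow_pair_bound {𝔸 : Type*} [NormedRing 𝔸] [NormedAlgebra ℂ 𝔸] (A B : 𝔸) :
    ∀ n : ℕ, 1 ≤ n →
      ‖A ^ n - B ^ n‖ ≤ ((‖A + B‖ + ‖A - B‖) / 2) ^ n - ((‖A + B‖ - ‖A - B‖) / 2) ^ n ∧
      ‖A ^ n + B ^ n‖ ≤ ((‖A + B‖ + ‖A - B‖) / 2) ^ n + ((‖A + B‖ - ‖A - B‖) / 2) ^ n := by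
  intro n hn
  induction n, hn using Nat.le_induction with
  | base => constructor <;> simp [pow_one] <;> linarith
  | succ n hn ih =>
    obtain ⟨ihm, ihp⟩ := ih
    set s := ‖A + B‖ with hs_def
    set d := ‖A - B‖ with hd_def
    have hs : 0 ≤ s := norm_nonneg _
    have hd : 0 ≤ d := norm_nonneg _
    set u := (s + d) / 2 with hu_def
    set v := (s - d) / 2 with hv_def
    have e1 : (2 : ℂ) • (A ^ (n + 1) - B ^ (n + 1))
        = (A ^ n - B ^ n) * (A + B) + (A ^ n + B ^ n) * (A - B) := by
      rw [two_smul]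
      simp only [pow_succ, mul_add, add_mul, mul_sub, sub_mul]
      abel
    have e2 : (2 : ℂ) • (A ^ (n + 1) + B ^ (n + 1))
        = (A ^ n + B ^ n) * (A + B) + (A ^ n - B ^ n) * (A - B) := by
      rw [two_smul]
      simp only [pow_succ, mul_add, add_mul, mul_sub, sub_mul]
      abel
    have hn2 : ∀ x : 𝔸, ‖(2 : ℂ) • x‖ = 2 * ‖x‖ := by
      intro x; rw [norm_smul]; norm_num
    have b1 : 2 * ‖A ^ (n + 1) - B ^ (n + 1)‖ ≤ (u ^ n - v ^ n) * s + (u ^ n + v ^ n) * d := by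
      rw [← hn2, e1]
      calc ‖(A ^ n - B ^ n) * (A + B) + (A ^ n + B ^ n) * (A - B)‖
          ≤ ‖(A ^ n - B ^ n) * (A + B)‖ + ‖(A ^ n + B ^ n) * (A - B)‖ := norm_add_le _ _
        _ ≤ ‖A ^ n - B ^ n‖ * s + ‖A ^ n + B ^ n‖ * d := by
            gcongr <;> exact norm_mul_le _ _
        _ ≤ (u ^ n - v ^ n) * s + (u ^ n + v ^ n) * d := by gcongr
    have b2 : 2 * ‖A ^ (n + 1) + B ^ (n + 1)‖ ≤ (u ^ n + v ^ n) * s + (u ^ n - v ^ n) * d := by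
      rw [← hn2, e2]
      calc ‖(A ^ n + B ^ n) * (A + B) + (A ^ n - B ^ n) * (A - B)‖
          ≤ ‖(A ^ n + B ^ n) * (A + B)‖ + ‖(A ^ n - B ^ n) * (A - B)‖ := norm_add_le _ _
        _ ≤ ‖A ^ n + B ^ n‖ * s + ‖A ^ n - B ^ n‖ * d := by
            gcongr <;> exact norm_mul_le _ _
        _ ≤ (u ^ n + v ^ n) * s + (u ^ n - v ^ n) * d := by gcongr
    have id1 : (u ^ n - v ^ n) * s + (u ^ n + v ^ n) * d = 2 * (u ^ (n + 1) - v ^ (n + 1)) := by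
      rw [hu_def, hv_def]; ring
    have id2 : (u ^ n + v ^ n) * s + (u ^ n - v ^ n) * d = 2 * (u ^ (n + 1) + v ^ (n + 1)) := by
      rw [hu_def, hv_def]; ring
    exact ⟨by linarith [id1 ▸ b1], by linarith [id2 ▸ b2]⟩

lemma my_exp_tail (u : ℝ) :
    HasSum (fun n : ℕ => u ^ (n + 2) / Nat.factorial (n + 2)) (Real.exp u - 1 - u) := by
  have h : HasSum (fun n : ℕ => u ^ n / (Nat.factorial n)) (Real.exp u) := by
    have hs := (Real.summable_pow_div_factorial u).hasSum
    rwa [show ∑' n : ℕ, u ^ n / (Nat.factorial n) = Real.exp u by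
      rw [Real.exp_eq_exp_ℝ, NormedSpace.exp_eq_tsum_div]] at hs
  refine (hasSum_nat_add_iff (f := fun n : ℕ => u ^ n / Nat.factorial n) 2).mpr ?_
  convert h using 1
  · rfl
  simp [Finset.sum_range_succ]

/-- If `‖A + B‖ ≤ ε₊` and `‖A - B‖ ≤ ε₋` with `ε₋ > 0`, and
`2 - exp(ε₊/2) sinh(ε₋/2)/(ε₋/2) > 0`, then
`‖A - B‖ ≤ (2 - exp(ε₊/2) sinh(ε₋/2)/(ε₋/2))⁻¹ ‖e^A - e^B‖`. -/
theorem norm_sub_le_of_norm_exp_sub_exp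
    {𝔸 : Type*} [NormedRing 𝔸] [NormedAlgebra ℂ 𝔸] [CompleteSpace 𝔸]
    (A B : 𝔸) (εp εm : ℝ) (hεm : 0 < εm)
    (h₁ : ‖A + B‖ ≤ εp) (h₂ : ‖A - B‖ ≤ εm)
    (hpos : 0 < 2 - Real.exp (εp/2) * (Real.sinh (εm/2) / (εm/2))) :
    ‖A - B‖ ≤ (2 - Real.exp (εp/2) * (Real.sinh (εm/2) / (εm/2)))⁻¹
        * ‖NormedSpace.exp A - NormedSpace.exp B‖ := by
  set C := 2 - Real.exp (εp/2) * (Real.sinh (εm/2) / (εm/2)) with hC_def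
  set s := ‖A + B‖ with hs_def
  set d := ‖A - B‖ with hd_def
  have hs0 : 0 ≤ s := norm_nonneg _
  have hd0 : 0 ≤ d := norm_nonneg _
  set u := (s + d) / 2 with hu_def
  set v := (s - d) / 2 with hv_def
  -- series decomposition
  set f : ℕ → 𝔸 := fun n => ((Nat.factorial n : ℂ))⁻¹ • A ^ n - ((Nat.factorial n : ℂ))⁻¹ • B ^ n
    with hf_def
  have sA : Summable (fun n : ℕ => ((Nat.factorial n : ℂ))⁻¹ • A ^ n) :=
    NormedSpace.expSeries_summable' A
  have sB : Summable (fun n : ℕ => ((Nat.factorial n : ℂ))⁻¹ • B ^ n) :=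
    NormedSpace.expSeries_summable' B
  have sf : Summable f := sA.sub sB
  have hexp : NormedSpace.exp A - NormedSpace.exp B = ∑' n, f n := by
    rw [NormedSpace.exp_eq_tsum ℂ]
    exact (Summable.tsum_sub sA sB).symm
  have hf01 : ∑ i ∈ Finset.range 2, f i = A - B := by
    simp [hf_def, Finset.sum_range_succ, Nat.factorial]
  have hsplit := Summable.sum_add_tsum_nat_add 2 sf
  have htail : NormedSpace.exp A - NormedSpace.exp B - (A - B) = ∑' n, f (n + 2) := by
    rw [hexp, ← hsplit, hf01]; abel
  -- term-wise bound
  have hterm : ∀ n : ℕ, ‖f (n + 2)‖ ≤ (u ^ (n + 2) - v ^ (n + 2)) / Nat.factorial (n + 2) := by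
    intro n
    have h1 : f (n + 2) = ((Nat.factorial (n + 2) : ℂ))⁻¹ • (A ^ (n + 2) - B ^ (n + 2)) := by
      rw [hf_def, smul_sub]
    have h2 : ‖((Nat.factorial (n + 2) : ℂ))⁻¹‖ = ((Nat.factorial (n + 2) : ℝ))⁻¹ := by
      rw [norm_inv, Complex.norm_natCast]
    rw [h1, norm_smul, h2, div_eq_inv_mul]
    exact mul_le_mul_of_nonneg_left (my_pow_pair_bound A B (n + 2) (by omega)).1 (by positivity)
  have hg : HasSum (fun n : ℕ => (u ^ (n + 2) - v ^ (n + 2)) / Nat.factorial (n + 2))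
      ((Real.exp u - 1 - u) - (Real.exp v - 1 - v)) := by
    have h := (my_exp_tail u).sub (my_exp_tail v)
    convert h using 2 with n
    · rfl
    rw [sub_div]
  have hbound : ‖NormedSpace.exp A - NormedSpace.exp B - (A - B)‖
      ≤ (Real.exp u - 1 - u) - (Real.exp v - 1 - v) := by
    rw [htail]
    exact tsum_of_norm_bounded hg hterm
  -- lower bound for ‖exp A - exp B‖
  have hrev : d ≤ ‖NormedSpace.exp A - NormedSpace.exp B‖
      + ‖NormedSpace.exp A - NormedSpace.exp B - (A - B)‖ := by
    calc d = ‖(NormedSpace.exp A - NormedSpace.exp B)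
        - (NormedSpace.exp A - NormedSpace.exp B - (A - B))‖ := by
          rw [hd_def]; congr 1; abel
      _ ≤ _ := norm_sub_le _ _
  have huv1 : Real.exp u - Real.exp v = 2 * Real.exp (s/2) * Real.sinh (d/2) := by
    rw [Real.sinh_eq, show u = s/2 + d/2 by rw [hu_def]; ring,
      show v = s/2 + -(d/2) by rw [hv_def]; ring, Real.exp_add, Real.exp_add]
    ring
  have huv2 : u - v = d := by rw [hu_def, hv_def]; ring
  have hlow : 2 * d - 2 * Real.exp (s/2) * Real.sinh (d/2)
      ≤ ‖NormedSpace.exp A - NormedSpace.exp B‖ := by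
    nlinarith [hrev, hbound, huv1, huv2]
  -- monotonicity of sinh x / x and exp
  have h3 : Real.sinh (d/2) * (εm/2) ≤ Real.sinh (εm/2) * (d/2) :=
    my_sinh_mul_le (by positivity) (by linarith)
  have h3' : Real.sinh (d/2) ≤ (Real.sinh (εm/2) / (εm/2)) * (d/2) := by
    rw [div_mul_eq_mul_div, le_div_iff₀ (by linarith : (0:ℝ) < εm/2)]
    linarith
  have h4 : Real.exp (s/2) ≤ Real.exp (εp/2) := Real.exp_le_exp.2 (by linarith)
  have hsd : 0 ≤ Real.sinh (d/2) := Real.sinh_nonneg_iff.2 (by positivity)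
  have hQ0 : 0 ≤ Real.sinh (εm/2) / (εm/2) :=
    div_nonneg (Real.sinh_nonneg_iff.2 (by linarith)) (by linarith)
  have hCd : C * d ≤ ‖NormedSpace.exp A - NormedSpace.exp B‖ := by
    have key : 2 * Real.exp (s/2) * Real.sinh (d/2)
        ≤ Real.exp (εp/2) * (Real.sinh (εm/2) / (εm/2)) * d := by
      nlinarith [Real.exp_pos (εp/2), Real.exp_pos (s/2)]
    rw [hC_def]
    nlinarith [hlow]
  calc d = C⁻¹ * (C * d) := by field_simp
    _ ≤ C⁻¹ * ‖NormedSpace.exp A - NormedSpace.exp B‖ :=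
        mul_le_mul_of_nonneg_left hCd (inv_nonneg.2 hpos.le)
end

section
/- Let H̃ : [0,T] → Matrix n n ℂ be continuous with H̃(t) Hermitian and ‖H̃(t)‖ ≤ J for all t ∈ [0,T], and let Ũ : [0,T] → Matrix n n ℂ solve Ũ′(t) = −i H̃(t) Ũ(t) with Ũ(0) = 1. Then for every unit vector ψ ∈ ℂⁿ: ‖(Ũ(T) − 1)ψ‖² ≤ ‖( ∫_0^T H̃(t) dt ) ψ‖² + 2( e^{JT} − 1 − JT − (JT)²/2 ). Equivalently, ⟨ψ, (2·1 − Ũ(T) − Ũ(T)†) ψ⟩ ≤ ∫_0^T ∫_0^T ⟨ψ, H̃(t₁) H̃(t₂) ψ⟩ dt₁ dt₂ + 2( e^{JT} − 1 − JT − (JT)²/2 ). -/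
open scoped Matrix.Norms.L2Operator

set_option maxHeartbeats 0

/-- Lowest-order Dyson bound on the deviation of the evolution from the identity.
If `Ũ' = -i H̃ Ũ`, `Ũ(0) = 1`, with `H̃` continuous, Hermitian and `‖H̃ t‖ ≤ J` on `[0,T]`,
then for every unit vector `ψ`,
`‖(Ũ(T) - 1)ψ‖² ≤ ‖(∫_0^T H̃) ψ‖² + 2(e^{JT} - 1 - JT - (JT)²/2)`. -/
theorem dyson_second_order_noise_bound {n : ℕ}
    (T J : ℝ) (hT : 0 < T) (hJ : 0 ≤ J)
    (H U : ℝ → Matrix (Fin n) (Fin n) ℂ)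
    (hHcont : ContinuousOn H (Set.Icc 0 T))
    (hHherm : ∀ t ∈ Set.Icc (0:ℝ) T, (H t).IsHermitian)
    (hHbound : ∀ t ∈ Set.Icc (0:ℝ) T, ‖H t‖ ≤ J)
    (hU0 : U 0 = 1)
    (hU : ∀ t ∈ Set.Icc (0:ℝ) T, HasDerivAt U ((-Complex.I) • (H t * U t)) t)
    (ψ : EuclideanSpace ℂ (Fin n)) (hψ : ‖ψ‖ = 1) :
    ‖Matrix.toEuclideanLin (U T - 1) ψ‖^2
      ≤ ‖Matrix.toEuclideanLin (∫ t in (0:ℝ)..T, H t) ψ‖^2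
        + 2 * (Real.exp (J*T) - 1 - J*T - (J*T)^2/2) := by
  classical
  have hT0 : (0:ℝ) ≤ T := hT.le
  set c := Matrix.toEuclideanCLM (𝕜 := ℂ) (n := Fin n) with hc_def
  -- clamped Hamiltonian
  set τ : ℝ → ℝ := fun t => min (max t 0) T with hτ_def
  have hτmem : ∀ t, τ t ∈ Set.Icc (0:ℝ) T :=
    fun t => ⟨le_min (le_max_right _ _) hT0, min_le_right _ _⟩
  have hτcont : Continuous τ := (continuous_id.max continuous_const).min continuous_const
  have hτeq : ∀ t ∈ Set.Icc (0:ℝ) T, τ t = t := by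
    intro t ht
    simp only [hτ_def, max_eq_left ht.1, min_eq_left ht.2]
  set Hc : ℝ → Matrix (Fin n) (Fin n) ℂ := fun t => H (τ t) with hHc_def
  have hHccont : Continuous Hc := hHcont.comp_continuous hτcont hτmem
  have hHcb : ∀ t, ‖Hc t‖ ≤ J := fun t => hHbound _ (hτmem t)
  have hHcherm : ∀ t, (Hc t).IsHermitian := fun t => hHherm _ (hτmem t)
  have hHcE : ∀ t ∈ Set.Icc (0:ℝ) T, Hc t = H t := by
    intro t ht; simp only [hHc_def, hτeq t ht]
  -- operator norm bound
  have hop : ∀ (A : Matrix (Fin n) (Fin n) ℂ) (x : EuclideanSpace ℂ (Fin n)),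
      ‖c A x‖ ≤ ‖A‖ * ‖x‖ := by
    intro A x
    rw [Matrix.cstar_norm_def]
    exact (Matrix.toEuclideanCLM (𝕜 := ℂ) A).le_opNorm x
  -- evaluation map as a CLM
  set L0 : Matrix (Fin n) (Fin n) ℂ →ₗ[ℂ] EuclideanSpace ℂ (Fin n) :=
    { toFun := fun A => c A ψ
      map_add' := fun A B => by show c (A + B) ψ = c A ψ + c B ψ; rw [map_add]; rfl
      map_smul' := fun r A => by show c (r • A) ψ = r • c A ψ; rw [map_smul]; rfl } with hL0_def
  set L : Matrix (Fin n) (Fin n) ℂ →L[ℂ] EuclideanSpace ℂ (Fin n) :=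
    LinearMap.toContinuousLinearMap L0 with hL_def
  have hLapp : ∀ A : Matrix (Fin n) (Fin n) ℂ, L A = c A ψ := fun A => rfl
  have hLd : ∀ {f : ℝ → Matrix (Fin n) (Fin n) ℂ} {f' : Matrix (Fin n) (Fin n) ℂ} {t : ℝ},
      HasDerivAt f f' t → HasDerivAt (fun s => c (f s) ψ) (c f' ψ) t := by
    intro f f' t hf
    exact ((L.restrictScalars ℝ).hasFDerivAt (x := f t)).comp_hasDerivAt t hf
  -- main functions
  set u : ℝ → EuclideanSpace ℂ (Fin n) := fun t => c (U t) ψ with hu_def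
  set q : ℝ → EuclideanSpace ℂ (Fin n) := fun t => c (Hc t) ψ with hq_def
  set m : ℝ → Matrix (Fin n) (Fin n) ℂ := fun t => ∫ s in (0:ℝ)..t, Hc s with hm_def
  set p : ℝ → EuclideanSpace ℂ (Fin n) := fun t => c (m t) ψ with hp_def
  set w : ℝ → EuclideanSpace ℂ (Fin n) := fun t => u t - ψ + Complex.I • p t with hw_def
  have hu0 : u 0 = ψ := by
    simp only [hu_def, hU0, map_one, ContinuousLinearMap.one_apply]
  have hqb : ∀ t, ‖q t‖ ≤ J := by
    intro t
    calc ‖q t‖ ≤ ‖Hc t‖ * ‖ψ‖ := hop _ _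
    _ = ‖Hc t‖ := by rw [hψ, mul_one]
    _ ≤ J := hHcb t
  -- derivatives
  have hu' : ∀ t ∈ Set.Icc (0:ℝ) T, HasDerivAt u ((-Complex.I) • c (Hc t) (u t)) t := by
    intro t ht
    have h1 := hLd (hU t ht)
    have h2 : c ((-Complex.I) • (H t * U t)) ψ = (-Complex.I) • c (Hc t) (u t) := by
      rw [map_smul, map_mul, hHcE t ht]; rfl
    rwa [h2] at h1
  have hucont : ContinuousOn u (Set.Icc (0:ℝ) T) :=
    fun t ht => ((hu' t ht).continuousAt).continuousWithinAt
  have hUcont : ContinuousOn U (Set.Icc (0:ℝ) T) :=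
    fun t ht => ((hU t ht).continuousAt).continuousWithinAt
  have hm' : ∀ t, HasDerivAt m (Hc t) t := by
    intro t
    exact intervalIntegral.integral_hasDerivAt_right
      (hHccont.intervalIntegrable _ _)
      hHccont.aestronglyMeasurable.stronglyMeasurableAtFilter
      hHccont.continuousAt
  have hp' : ∀ t, HasDerivAt p (q t) t := fun t => hLd (hm' t)
  have hpcont : Continuous p := continuous_iff_continuousAt.2 fun t => (hp' t).continuousAt
  have hqcont : Continuous q := L.continuous.comp hHccont
  have hwcont : ContinuousOn w (Set.Icc (0:ℝ) T) :=
    (hucont.sub continuousOn_const).add ((hpcont.const_smul Complex.I).continuousOn)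
  have hw0 : w 0 = 0 := by
    have : m 0 = 0 := intervalIntegral.integral_same
    simp [hw_def, hu0, hp_def, this]
  have hw' : ∀ t ∈ Set.Icc (0:ℝ) T,
      HasDerivAt w ((-Complex.I) • c (Hc t) (u t - ψ)) t := by
    intro t ht
    have h1 := ((hu' t ht).sub_const ψ).add ((hp' t).const_smul Complex.I)
    refine h1.congr_deriv (Eq.symm ?_)
    rw [map_sub, smul_sub, sub_eq_add_neg, ← neg_smul, neg_neg]
  -- realness of expectation values of Hc
  have hIm : ∀ (t : ℝ) (x : EuclideanSpace ℂ (Fin n)),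
      (inner ℂ x (c (Hc t) x) : ℂ).im = 0 := by
    intro t x
    have h1 : ContinuousLinearMap.adjoint (c (Hc t)) = c (Hc t) := by
      rw [← ContinuousLinearMap.star_eq_adjoint, ← map_star]
      congr 1
      exact hHcherm t
    have h2 : (inner ℂ x (c (Hc t) x) : ℂ) = starRingEnd ℂ (inner ℂ x (c (Hc t) x) : ℂ) := by
      conv_lhs => rw [← h1, ContinuousLinearMap.adjoint_inner_right]
      rw [inner_conj_symm]
    exact Complex.conj_eq_iff_im.mp h2.symm
  have hadj : ∀ (t : ℝ) (x y : EuclideanSpace ℂ (Fin n)),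
      (inner ℂ x (c (Hc t) y) : ℂ) = inner ℂ (c (Hc t) x) y := by
    intro t x y
    have h1 : ContinuousLinearMap.adjoint (c (Hc t)) = c (Hc t) := by
      rw [← ContinuousLinearMap.star_eq_adjoint, ← map_star]
      congr 1
      exact hHcherm t
    rw [← ContinuousLinearMap.adjoint_inner_left, h1]
  -- Gronwall bound : ‖u t - ψ‖ ≤ exp (J t) - 1 on [0, T]
  have hgron : ∀ t ∈ Set.Icc (0:ℝ) T, ‖u t - ψ‖ ≤ Real.exp (J * t) - 1 := by
    have key := norm_le_gronwallBound_of_norm_deriv_right_le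
      (f := fun t => u t - ψ) (f' := fun t => (-Complex.I) • c (Hc t) (u t))
      (δ := 0) (K := J) (ε := J) (a := 0) (b := T)
      (hucont.sub continuousOn_const)
      (fun x hx => ((hu' x (Set.Ico_subset_Icc_self hx)).sub_const ψ).hasDerivWithinAt)
      (by simp [hu0])
      (by
        intro x hx
        have h3 : ‖(-Complex.I) • c (Hc x) (u x)‖ = ‖c (Hc x) (u x)‖ := by
          rw [norm_smul]; simp
        rw [h3]
        calc ‖c (Hc x) (u x)‖ ≤ ‖Hc x‖ * ‖u x‖ := hop _ _
        _ ≤ J * (‖u x - ψ‖ + 1) := by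
            apply mul_le_mul (hHcb x) ?_ (norm_nonneg _) hJ
            calc ‖u x‖ = ‖(u x - ψ) + ψ‖ := by rw [sub_add_cancel]
            _ ≤ ‖u x - ψ‖ + ‖ψ‖ := norm_add_le _ _
            _ = ‖u x - ψ‖ + 1 := by rw [hψ]
        _ = J * ‖u x - ψ‖ + J := by ring)
    intro t ht
    have h2 := key t ht
    rw [sub_zero] at h2
    refine h2.trans ?_
    rcases eq_or_ne J 0 with h | h
    · subst h; rw [gronwallBound_K0]; simp
    · simp [gronwallBound_of_K_ne_0 h, div_self h]
  -- antiderivative facts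
  have hexpA : ∀ s : ℝ, HasDerivAt (fun r => Real.exp (J*r) - 1 - J*r)
      (J * (Real.exp (J*s) - 1)) s := by
    intro s
    have h1 : HasDerivAt (fun r : ℝ => J * r) J s := by
      simpa using (hasDerivAt_id s).const_mul J
    have h2 := (h1.exp.sub_const 1).sub h1
    exact h2.congr_deriv (by ring)
  have hexpB : ∀ s : ℝ, HasDerivAt (fun r => Real.exp (J*r) - 1 - J*r - J^2*r^2/2)
      (J * (Real.exp (J*s) - 1 - J*s)) s := by
    intro s
    have h1 : HasDerivAt (fun r : ℝ => J^2*r^2/2) (J^2*s) s := by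
      have := ((hasDerivAt_pow 2 s).const_mul (J^2)).div_const 2
      exact this.congr_deriv (by ring)
    have h2 := (hexpA s).sub h1
    exact h2.congr_deriv (by ring)
  -- integrand expression for w'
  have hwint : ∀ s : ℝ, c (Hc s) (u s - ψ) = L (Hc s * U s - Hc s) := by
    intro s
    have h1 : c (Hc s * U s - Hc s) ψ = c (Hc s) (u s - ψ) := by
      rw [map_sub c, map_mul c]
      simp [ContinuousLinearMap.sub_apply, ContinuousLinearMap.mul_apply, hu_def]
    rw [hLapp]; exact h1.symm
  have hwintcont : ContinuousOn (fun s => (-Complex.I) • c (Hc s) (u s - ψ))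
      (Set.Icc (0:ℝ) T) := by
    have : ContinuousOn (fun s => L (Hc s * U s - Hc s)) (Set.Icc (0:ℝ) T) :=
      L.continuous.comp_continuousOn
        ((hHccont.continuousOn.mul hUcont).sub hHccont.continuousOn)
    exact ((this.congr (fun s _ => hwint s)).const_smul (-Complex.I))

  -- w norm bound
  have hwb : ∀ t ∈ Set.Icc (0:ℝ) T, ‖w t‖ ≤ Real.exp (J*t) - 1 - J*t := by
    intro t ht
    have hsub : Set.Icc (0:ℝ) t ⊆ Set.Icc 0 T := Set.Icc_subset_Icc le_rfl ht.2
    have hint : IntervalIntegrable (fun s => (-Complex.I) • c (Hc s) (u s - ψ))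
        MeasureTheory.volume 0 t := by
      apply ContinuousOn.intervalIntegrable
      rw [Set.uIcc_of_le ht.1]
      exact hwintcont.mono hsub
    have hFTC := intervalIntegral.integral_eq_sub_of_hasDerivAt
      (f := w) (f' := fun s => (-Complex.I) • c (Hc s) (u s - ψ))
      (fun s hs => hw' s (hsub (by rwa [Set.uIcc_of_le ht.1] at hs))) hint
    rw [hw0, sub_zero] at hFTC
    rw [← hFTC]
    calc ‖∫ s in (0:ℝ)..t, (-Complex.I) • c (Hc s) (u s - ψ)‖
        ≤ ∫ s in (0:ℝ)..t, ‖(-Complex.I) • c (Hc s) (u s - ψ)‖ :=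
          intervalIntegral.norm_integral_le_integral_norm ht.1
    _ ≤ ∫ s in (0:ℝ)..t, J * (Real.exp (J*s) - 1) := by
          apply intervalIntegral.integral_mono_on ht.1 ?_ ?_ ?_
          · apply ContinuousOn.intervalIntegrable
            rw [Set.uIcc_of_le ht.1]
            exact (hwintcont.mono hsub).norm
          · apply Continuous.intervalIntegrable
            fun_prop
          · intro x hx
            rw [norm_smul]
            simp only [norm_neg, Complex.norm_I, one_mul]
            calc ‖c (Hc x) (u x - ψ)‖ ≤ ‖Hc x‖ * ‖u x - ψ‖ := hop _ _
            _ ≤ J * (Real.exp (J*x) - 1) :=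
                mul_le_mul (hHcb x) (hgron x (hsub hx)) (norm_nonneg _) hJ
    _ = Real.exp (J*t) - 1 - J*t := by
          have h7 := intervalIntegral.integral_eq_sub_of_hasDerivAt
            (f := fun r => Real.exp (J*r) - 1 - J*r) (a := 0) (b := t)
            (fun s _ => hexpA s) (by apply Continuous.intervalIntegrable; fun_prop)
          simpa using h7
  -- derivative of re-inner
  have hdre : ∀ {f g : ℝ → EuclideanSpace ℂ (Fin n)} {f' g' : EuclideanSpace ℂ (Fin n)} {t : ℝ},
      HasDerivAt f f' t → HasDerivAt g g' t →
      HasDerivAt (fun s => (inner ℂ (f s) (g s) : ℂ).re)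
        ((inner ℂ (f t) g' : ℂ) + (inner ℂ f' (g t) : ℂ)).re t := by
    intro f g f' g' t hf hg
    have h1 := hf.inner ℂ hg
    exact (Complex.reCLM.hasFDerivAt
      (x := (inner ℂ (f t) (g t) : ℂ))).comp_hasDerivAt t h1
  -- unitarity at T
  have huu : ∀ t ∈ Set.uIcc (0:ℝ) T,
      HasDerivAt (fun s => (inner ℂ (u s) (u s) : ℂ).re) ((fun _ : ℝ => (0:ℝ)) t) t := by
    intro t ht
    rw [Set.uIcc_of_le hT0] at ht
    have h1 := hdre (hu' t ht) (hu' t ht)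
    refine h1.congr_deriv (Eq.symm ?_)
    rw [inner_smul_right, inner_smul_left]
    have him := hIm t (u t)
    have hconj : (inner ℂ (c (Hc t) (u t)) (u t) : ℂ)
        = starRingEnd ℂ (inner ℂ (u t) (c (Hc t) (u t)) : ℂ) := (inner_conj_symm _ _).symm
    rw [hconj]
    set z := (inner ℂ (u t) (c (Hc t) (u t)) : ℂ) with hz
    simp [Complex.add_re, Complex.mul_re, Complex.mul_im, him]
  have e2 : (inner ℂ ψ ψ : ℂ).re = 1 := by
    have h1 := inner_self_eq_norm_sq (𝕜 := ℂ) ψ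
    rw [hψ] at h1
    simpa using h1
  have huT : (inner ℂ (u T) (u T) : ℂ).re = 1 := by
    have h0 := intervalIntegral.integral_eq_sub_of_hasDerivAt huu
      (intervalIntegrable_const)
    simp only [intervalIntegral.integral_const, smul_zero, sub_zero, smul_eq_mul, mul_zero] at h0
    rw [hu0] at h0
    linarith [e2, h0]
  -- identity (i)
  have hpp : ∀ t ∈ Set.uIcc (0:ℝ) T,
      HasDerivAt (fun s => (inner ℂ (p s) (p s) : ℂ).re)
        ((fun s => 2 * (inner ℂ (q s) (p s) : ℂ).re) t) t := by
    intro t _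
    have h1 := hdre (hp' t) (hp' t)
    refine h1.congr_deriv (Eq.symm ?_)
    rw [Complex.add_re]
    have h2 : (inner ℂ (p t) (q t) : ℂ).re = (inner ℂ (q t) (p t) : ℂ).re := by
      rw [← inner_conj_symm (p t) (q t)]; exact Complex.conj_re _
    rw [h2]; ring
  have hqp_cont : Continuous (fun s => (inner ℂ (q s) (p s) : ℂ).re) :=
    Complex.continuous_re.comp (hqcont.inner hpcont)
  have hI2 := intervalIntegral.integral_eq_sub_of_hasDerivAt hpp
    ((continuous_const.mul hqp_cont).intervalIntegrable _ _)
  have hp0 : p 0 = 0 := by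
    have hm0 : m 0 = 0 := intervalIntegral.integral_same
    simp [hp_def, hm0]
  rw [hp0, inner_zero_left] at hI2
  rw [intervalIntegral.integral_const_mul] at hI2
  simp only [Complex.zero_re, sub_zero] at hI2
  -- identity (ii)
  have hqw_cont : ContinuousOn (fun s => (inner ℂ (q s) (w s) : ℂ)) (Set.Icc (0:ℝ) T) :=
    hqcont.continuousOn.inner hwcont
  have hpsi : ∀ t ∈ Set.uIcc (0:ℝ) T,
      HasDerivAt (fun s => (inner ℂ ψ (u s) : ℂ).re)
        ((fun s => (inner ℂ (q s) (w s) : ℂ).im - (inner ℂ (q s) (p s) : ℂ).re) t) t := by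
    intro t ht
    rw [Set.uIcc_of_le hT0] at ht
    have h1 := hdre (hasDerivAt_const t ψ) (hu' t ht)
    refine h1.congr_deriv (Eq.symm ?_)
    rw [inner_smul_right, inner_zero_left, add_zero]
    rw [hadj t ψ (u t)]
    have hudec : u t = w t + ψ - Complex.I • p t := by
      have hwt : w t = u t - ψ + Complex.I • p t := rfl
      rw [hwt]; abel
    rw [hudec, inner_sub_right, inner_add_right, inner_smul_right]
    have him2 : (inner ℂ (c (Hc t) ψ) ψ : ℂ).im = 0 := by
      have h3 : (inner ℂ (c (Hc t) ψ) ψ : ℂ)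
          = starRingEnd ℂ (inner ℂ ψ (c (Hc t) ψ) : ℂ) := (inner_conj_symm _ _).symm
      rw [h3, Complex.conj_im, hIm t ψ, neg_zero]
    have hq_eq : q t = c (Hc t) ψ := rfl
    rw [← hq_eq] at *
    set z1 := (inner ℂ (q t) (w t) : ℂ)
    set z2 := (inner ℂ (q t) ψ : ℂ)
    set z3 := (inner ℂ (q t) (p t) : ℂ)
    simp only [Complex.mul_re, Complex.mul_im, Complex.add_im, Complex.sub_im,
      Complex.add_re, Complex.sub_re, Complex.neg_re, Complex.neg_im, Complex.I_re,
      Complex.I_im]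
    rw [him2]
    ring
  have hI1 := intervalIntegral.integral_eq_sub_of_hasDerivAt hpsi (by
    apply ContinuousOn.intervalIntegrable
    rw [Set.uIcc_of_le hT0]
    exact (Complex.continuous_im.comp_continuousOn hqw_cont).sub hqp_cont.continuousOn)
  rw [hu0, e2] at hI1
  have hsplit : (∫ s in (0:ℝ)..T,
        ((inner ℂ (q s) (w s) : ℂ).im - (inner ℂ (q s) (p s) : ℂ).re))
      = (∫ s in (0:ℝ)..T, (inner ℂ (q s) (w s) : ℂ).im)
        - ∫ s in (0:ℝ)..T, (inner ℂ (q s) (p s) : ℂ).re := by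
    apply intervalIntegral.integral_sub
    · apply ContinuousOn.intervalIntegrable
      rw [Set.uIcc_of_le hT0]
      exact Complex.continuous_im.comp_continuousOn hqw_cont
    · exact hqp_cont.intervalIntegrable _ _
  rw [hsplit] at hI1
  -- the tail bound
  have htail_int : IntervalIntegrable (fun s => J * (Real.exp (J*s) - 1 - J*s))
      MeasureTheory.volume 0 T := by
    apply Continuous.intervalIntegrable; fun_prop
  have hIm_int : IntervalIntegrable (fun s => (inner ℂ (q s) (w s) : ℂ).im)
      MeasureTheory.volume 0 T := by
    apply ContinuousOn.intervalIntegrable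
    rw [Set.uIcc_of_le hT0]
    exact Complex.continuous_im.comp_continuousOn hqw_cont
  have e5 : -(∫ s in (0:ℝ)..T, (inner ℂ (q s) (w s) : ℂ).im)
      ≤ ∫ s in (0:ℝ)..T, J * (Real.exp (J*s) - 1 - J*s) := by
    rw [← intervalIntegral.integral_neg]
    apply intervalIntegral.integral_mono_on hT0 hIm_int.neg htail_int
    intro x hx
    simp only [Pi.neg_apply]
    have h6 : |(inner ℂ (q x) (w x) : ℂ).im| ≤ J * (Real.exp (J*x) - 1 - J*x) := by
      calc |(inner ℂ (q x) (w x) : ℂ).im| ≤ ‖(inner ℂ (q x) (w x) : ℂ)‖ :=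
            Complex.abs_im_le_norm _
      _ = ‖(inner ℂ (q x) (w x) : ℂ)‖ := rfl
      _ ≤ ‖q x‖ * ‖w x‖ := norm_inner_le_norm _ _
      _ ≤ J * (Real.exp (J*x) - 1 - J*x) :=
            mul_le_mul (hqb x) (hwb x hx) (norm_nonneg _) hJ
    have h7 := neg_abs_le ((inner ℂ (q x) (w x) : ℂ).im)
    linarith
  have e6 : (∫ s in (0:ℝ)..T, J * (Real.exp (J*s) - 1 - J*s))
      = Real.exp (J*T) - 1 - J*T - J^2*T^2/2 := by
    have h8 := intervalIntegral.integral_eq_sub_of_hasDerivAt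
      (f := fun r => Real.exp (J*r) - 1 - J*r - J^2*r^2/2) (a := 0) (b := T)
      (fun s _ => hexpB s) htail_int
    simpa using h8
  -- rewriting the goal
  have hlin : ∀ (A : Matrix (Fin n) (Fin n) ℂ), (Matrix.toEuclideanLin A) ψ = c A ψ := by
    intro A; rw [← Matrix.coe_toEuclideanCLM_eq_toEuclideanLin]; rfl
  have hgoalL : (Matrix.toEuclideanLin (U T - 1)) ψ = u T - ψ := by
    rw [hlin, map_sub, map_one]
    simp [hu_def]
  have hMT : (∫ t in (0:ℝ)..T, H t) = m T := by
    exact intervalIntegral.integral_congr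
      (fun s hs => (hHcE s (by rwa [Set.uIcc_of_le hT0] at hs)).symm)
  have hgoalR : (Matrix.toEuclideanLin (∫ t in (0:ℝ)..T, H t)) ψ = p T := by
    rw [hlin, hMT]
  rw [hgoalL, hgoalR]
  -- final arithmetic
  have hnorm : ‖u T - ψ‖^2 = (inner ℂ (u T) (u T) : ℂ).re + (inner ℂ ψ ψ : ℂ).re
      - 2 * (inner ℂ ψ (u T) : ℂ).re := by
    have h1 := inner_self_eq_norm_sq (𝕜 := ℂ) (u T - ψ)
    rw [inner_sub_sub_self] at h1
    have h2 : (inner ℂ (u T) ψ : ℂ).re = (inner ℂ ψ (u T) : ℂ).re := by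
      rw [← inner_conj_symm (u T) ψ]; exact Complex.conj_re _
    rw [← h1]
    simp only [map_add, map_sub, RCLike.re_to_complex]
    rw [h2]; ring
  have hnormp : ‖p T‖^2 = (inner ℂ (p T) (p T) : ℂ).re := by
    have h1 := inner_self_eq_norm_sq (𝕜 := ℂ) (p T)
    rw [← h1]
    simp
  have hsq : (J*T)^2/2 = J^2*T^2/2 := by ring
  rw [hnorm, hnormp, hsq, huT, e2]
  linarith [hI1, hI2, e5, e6]
end
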